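/- arXiv:2311.10948 — 9 statements merged into one kernel-verified Lean document; each statement's English description precedes it below -/
import Mathlib

section
/- If f(x) = Σ_{i=0}^∞ e^{-λ_i} x^i is an entire function with positive coefficients satisfying ∫_0^∞ f(sx)/f(x) dx = 1/(1-s) - β for all s ∈ [0,1), then setting u(x) = x f'(x)/f(x), we have |∫_0^∞ e^{-t u(x)} dx - 1/t| ≤ 1 + β for all t > 0. -/
open MeasureTheory Real Set

lemma jensen_aux (w : ℕ → ℝ) (hw : ∀ i, 0 < w i) (hW : Summable w)
    (hG : Summable (fun i : ℕ => (i:ℝ) * w i)) (c : ℝ)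
    (hE : Summable (fun i => w i * Real.exp (c * i))) :
    (∑' i, w i) * Real.exp (c * ((∑' i : ℕ, (i:ℝ) * w i) / (∑' i, w i)))
      ≤ ∑' i, w i * Real.exp (c * i) := by
  set W := ∑' i, w i with hWdef
  set G := ∑' i : ℕ, (i:ℝ) * w i with hGdef
  have hWpos : 0 < W := Summable.tsum_pos hW (fun i => (hw i).le) 0 (hw 0)
  set m := G / W with hmdef
  have hmW : m * W = G := div_mul_cancel₀ G hWpos.ne'
  have key : ∀ i, Real.exp (c*m) * (w i + c * ((i:ℝ) * w i) - (c*m) * w i)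
      ≤ w i * Real.exp (c * i) := by
    intro i
    have h1 : c*i - c*m + 1 ≤ Real.exp (c*i - c*m) := by
      have := Real.add_one_le_exp (c*i - c*m); linarith
    have h2 : Real.exp (c*m) * (c*i - c*m + 1) ≤ Real.exp (c*i) := by
      calc Real.exp (c*m) * (c*i - c*m + 1) ≤ Real.exp (c*m) * Real.exp (c*i - c*m) :=
            mul_le_mul_of_nonneg_left h1 (Real.exp_pos _).le
        _ = Real.exp (c*i) := by rw [← Real.exp_add]; ring_nf
    have h3 := mul_le_mul_of_nonneg_left h2 (hw i).le
    calc Real.exp (c*m) * (w i + c * ((i:ℝ) * w i) - (c*m) * w i)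
        = w i * (Real.exp (c*m) * (c*i - c*m + 1)) := by ring
      _ ≤ w i * Real.exp (c*i) := h3
  have hlowsum : Summable (fun i : ℕ => Real.exp (c*m) * (w i + c * ((i:ℝ) * w i) - (c*m) * w i)) :=
    (((hW.add (hG.mul_left c)).sub (hW.mul_left (c*m))).mul_left _)
  have htsum : (∑' i : ℕ, Real.exp (c*m) * (w i + c * ((i:ℝ) * w i) - (c*m) * w i))
      = W * Real.exp (c * m) := by
    rw [tsum_mul_left, Summable.tsum_sub (hW.add (hG.mul_left c)) (hW.mul_left (c*m)),
      Summable.tsum_add hW (hG.mul_left c), tsum_mul_left, tsum_mul_left]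
    rw [← hWdef, ← hGdef]
    have : W + c * G - c * m * W = W := by rw [mul_assoc, hmW]; ring
    rw [this]; ring
  calc W * Real.exp (c * m) = _ := htsum.symm
    _ ≤ ∑' i, w i * Real.exp (c * i) := Summable.tsum_le_tsum key hlowsum hE

theorem stmt0 (β : ℝ) (hβ : β ∈ Set.Ico (0:ℝ) 1)
    (lam : ℕ → ℝ) (f : ℝ → ℝ)
    (hf : ∀ x : ℝ, f x = ∑' i : ℕ, Real.exp (-lam i) * x ^ i)
    (hbal : ∀ s ∈ Set.Ico (0:ℝ) 1,
      (∫ x in Set.Ioi (0:ℝ), f (s * x) / f x) = 1 / (1 - s) - β)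
    (u : ℝ → ℝ) (hu : ∀ x, u x = x * deriv f x / f x) :
    ∀ t > (0:ℝ),
      |(∫ x in Set.Ioi (0:ℝ), Real.exp (-t * u x)) - 1 / t| ≤ 1 + β := by
  obtain ⟨hβ0, hβ1⟩ := hβ
  set a : ℕ → ℝ := fun i => Real.exp (-lam i) with ha_def
  have ha : ∀ i, 0 < a i := fun i => Real.exp_pos _
  -- Step A : summability on [0, ∞)
  have hS : ∀ x : ℝ, 0 ≤ x → Summable fun i => a i * x ^ i := by
    by_contra hcon
    push_neg at hcon
    obtain ⟨x0, hx0, hns⟩ := hcon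
    have hzero : ∀ x : ℝ, x0 ≤ x → f x = 0 := by
      intro x hx
      rw [hf]
      apply tsum_eq_zero_of_not_summable
      intro hsx
      exact hns (hsx.of_nonneg_of_le
        (fun i => by positivity)
        (fun i => mul_le_mul_of_nonneg_left (pow_le_pow_left₀ hx0 hx i) (ha i).le))
    have hx0b : 0 < x0 + 1 + β := by linarith
    set s : ℝ := 1 - 1/(x0 + 1 + β) with hs_def
    have hsle : 1/(x0+1+β) ≤ 1 := by
      rw [div_le_one hx0b]; linarith
    have hspos : 0 < 1/(x0+1+β) := by positivity
    have hs_mem : s ∈ Set.Ico (0:ℝ) 1 := ⟨by rw [hs_def]; linarith, by rw [hs_def]; linarith⟩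
    have hval := hbal s hs_mem
    have h1s : 1 - s = 1/(x0+1+β) := by rw [hs_def]; ring
    have hinv : (1:ℝ)/(1-s) = x0 + 1 + β := by rw [h1s, one_div_one_div]
    -- bound the integral by x0
    have hquot : ∀ x : ℝ, 0 < x → f (s*x) / f x ≤ Set.indicator (Set.Ioo (0:ℝ) x0) (fun _ => (1:ℝ)) x := by
      intro x hx
      by_cases hxx0 : x0 ≤ x
      · have : f x = 0 := hzero x hxx0
        rw [this, div_zero]
        exact Set.indicator_nonneg (fun _ _ => zero_le_one) x
      · push_neg at hxx0
        rw [Set.indicator_of_mem (Set.mem_Ioo.mpr ⟨hx, hxx0⟩)]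
        by_cases hsumx : Summable fun i => a i * x ^ i
        · have hfxpos : 0 < f x := by
            rw [hf]
            exact Summable.tsum_pos hsumx (fun i => by positivity) 0 (by simpa using (ha 0))
          rw [div_le_one hfxpos, hf, hf]
          have hsx0 : 0 ≤ s * x := mul_nonneg hs_mem.1 hx.le
          refine Summable.tsum_le_tsum (fun i => ?_) ?_ hsumx
          · exact mul_le_mul_of_nonneg_left
              (pow_le_pow_left₀ hsx0 (by nlinarith [hs_mem.2] : s * x ≤ x) i) (ha i).le
          · exact hsumx.of_nonneg_of_le (fun i => by positivity)
              (fun i => mul_le_mul_of_nonneg_left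
                (pow_le_pow_left₀ hsx0 (by nlinarith [hs_mem.2] : s * x ≤ x) i) (ha i).le)
        · rw [hf x, tsum_eq_zero_of_not_summable hsumx, div_zero]
          exact zero_le_one
    have hindint : IntegrableOn (Set.indicator (Set.Ioo (0:ℝ) x0) (fun _ => (1:ℝ))) (Set.Ioi 0) := by
      apply Integrable.integrableOn
      rw [integrable_indicator_iff measurableSet_Ioo]
      exact integrableOn_const measure_Ioo_lt_top.ne
    have hbound : (∫ x in Set.Ioi (0:ℝ), f (s*x) / f x) ≤ x0 := by
      have h1 : (∫ x in Set.Ioi (0:ℝ), f (s*x) / f x)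
          ≤ ∫ x in Set.Ioi (0:ℝ), Set.indicator (Set.Ioo (0:ℝ) x0) (fun _ => (1:ℝ)) x := by
        apply integral_mono_of_nonneg
        · filter_upwards [ae_restrict_mem measurableSet_Ioi] with x hx
          have hx' : (0:ℝ) < x := hx
          have h0 : 0 ≤ s * x := mul_nonneg hs_mem.1 hx'.le
          rw [hf, hf]
          exact div_nonneg (tsum_nonneg fun i => mul_nonneg (ha i).le (pow_nonneg h0 i))
            (tsum_nonneg fun i => mul_nonneg (ha i).le (pow_nonneg hx'.le i))
        · exact hindint
        · filter_upwards [ae_restrict_mem measurableSet_Ioi] with x hx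
          exact hquot x hx
      have h2 : (∫ x in Set.Ioi (0:ℝ), Set.indicator (Set.Ioo (0:ℝ) x0) (fun _ => (1:ℝ)) x) = x0 := by
        rw [integral_indicator measurableSet_Ioo, Measure.restrict_restrict measurableSet_Ioo,
          Set.inter_eq_left.mpr (fun y hy => hy.1)]
        simp [Real.volume_Ioo, ENNReal.toReal_ofReal hx0, hx0]
      linarith [h1, h2.le, h2.ge]
    rw [hval, hinv] at hbound
    linarith
  -- absolute summability everywhere
  have hSa : ∀ y : ℝ, Summable fun i => a i * y ^ i := by
    intro y
    apply Summable.of_abs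
    have : (fun i => |a i * y ^ i|) = fun i => a i * |y| ^ i := by
      funext i; rw [abs_mul, abs_pow, abs_of_pos (ha i)]
    rw [this]
    exact hS |y| (abs_nonneg y)
  -- weighted summability
  have hS1 : ∀ x : ℝ, 0 ≤ x → Summable fun i : ℕ => (i:ℝ) * (a i * x ^ i) := by
    intro x hx
    apply Summable.of_nonneg_of_le (fun i => by positivity) (fun i => ?_) (hS (2*x) (by linarith))
    have hi : (i:ℝ) ≤ 2^i := by exact_mod_cast (Nat.lt_two_pow_self (n := i)).le
    calc (i:ℝ) * (a i * x ^ i) ≤ (2:ℝ)^i * (a i * x ^ i) :=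
          mul_le_mul_of_nonneg_right hi (by positivity)
      _ = a i * (2*x) ^ i := by rw [mul_pow]; ring
  -- derivative
  have hD : ∀ x : ℝ, 0 < x → HasDerivAt f ((∑' i : ℕ, (i:ℝ) * (a i * x ^ i)) / x) x := by
    intro x hx
    set R : ℝ := x + 1 with hR_def
    have hR1 : (1:ℝ) ≤ R := by rw [hR_def]; linarith
    have hR0 : (0:ℝ) ≤ R := by linarith
    have hu_sum : Summable (fun n : ℕ => a n * ((n:ℝ) * R ^ (n-1))) := by
      apply Summable.of_nonneg_of_le (fun n => by positivity) (fun n => ?_) (hS1 R hR0)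
      calc a n * ((n:ℝ) * R ^ (n-1)) ≤ a n * ((n:ℝ) * R ^ n) := by
            apply mul_le_mul_of_nonneg_left _ (ha n).le
            exact mul_le_mul_of_nonneg_left (pow_le_pow_right₀ hR1 (Nat.sub_le n 1)) (Nat.cast_nonneg n)
        _ = (n:ℝ) * (a n * R ^ n) := by ring
    have hunif : TendstoUniformlyOn
        (fun N y => ∑ i ∈ Finset.range N, a i * ((i:ℝ) * y ^ (i-1)))
        (fun y => ∑' i : ℕ, a i * ((i:ℝ) * y ^ (i-1))) Filter.atTop (Metric.ball 0 R) := by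
      apply tendstoUniformlyOn_tsum_nat hu_sum
      intro n y hy
      have hyR : |y| ≤ R := le_of_lt (by simpa [Real.dist_eq] using hy)
      rw [Real.norm_eq_abs, abs_mul, abs_mul, abs_of_pos (ha n), Nat.abs_cast, abs_pow]
      exact mul_le_mul_of_nonneg_left
        (mul_le_mul_of_nonneg_left (pow_le_pow_left₀ (abs_nonneg y) hyR _) (Nat.cast_nonneg n))
        (ha n).le
    have hxball : x ∈ Metric.ball (0:ℝ) R := by
      simp only [Metric.mem_ball, Real.dist_eq, sub_zero]
      rw [abs_of_pos hx]; linarith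
    have hder : HasDerivAt f (∑' i : ℕ, a i * ((i:ℝ) * x ^ (i-1))) x := by
      apply hasDerivAt_of_tendstoUniformlyOn Metric.isOpen_ball hunif
      · filter_upwards with N y _
        apply HasDerivAt.sum
        intro i _
        simpa using (hasDerivAt_pow i y).const_mul (a i)
      · intro y _
        rw [hf y]
        simp only [Finset.sum_apply]
        exact (hSa y).hasSum.tendsto_sum_nat
      · exact hxball
    have hval : (∑' i : ℕ, a i * ((i:ℝ) * x ^ (i-1))) = (∑' i : ℕ, (i:ℝ) * (a i * x ^ i)) / x := by
      rw [eq_div_iff hx.ne', ← tsum_mul_right]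
      apply tsum_congr
      intro i
      cases i with
      | zero => simp
      | succ n =>
        simp only [Nat.add_sub_cancel, pow_succ]
        ring
    rwa [hval] at hder
  -- formula for u
  have hUeq : ∀ x : ℝ, 0 < x →
      u x = (∑' i : ℕ, (i:ℝ) * (a i * x ^ i)) / (∑' i : ℕ, a i * x ^ i) := by
    intro x hx
    rw [hu, (hD x hx).deriv, hf, mul_div_assoc', mul_div_cancel_left₀ _ hx.ne']
  -- positivity of f
  have hfpos : ∀ x : ℝ, 0 < x → 0 < f x := by
    intro x hx
    rw [hf]
    exact Summable.tsum_pos (hSa x) (fun i => mul_nonneg (ha i).le (pow_nonneg hx.le i)) 0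
      (by simpa using (ha 0))
  -- key pointwise inequality
  have hkey : ∀ x : ℝ, 0 < x → ∀ c : ℝ, f x * Real.exp (c * u x) ≤ f (Real.exp c * x) := by
    intro x hx c
    have hw : ∀ i, 0 < a i * x ^ i := fun i => mul_pos (ha i) (pow_pos hx i)
    have hpow : ∀ i : ℕ, a i * (Real.exp c * x) ^ i = (a i * x ^ i) * Real.exp (c * i) := by
      intro i
      rw [mul_pow, ← Real.exp_nat_mul]
      ring_nf
    have hE : Summable fun i : ℕ => (a i * x ^ i) * Real.exp (c * i) := by
      refine (hS (Real.exp c * x) (by positivity)).congr hpow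
    have hjen := jensen_aux (fun i => a i * x ^ i) hw (hS x hx.le) (hS1 x hx.le) c hE
    rw [hf x, hf (Real.exp c * x), hUeq x hx]
    calc (∑' i : ℕ, a i * x ^ i) *
          Real.exp (c * ((∑' i : ℕ, (i:ℝ) * (a i * x ^ i)) / (∑' i : ℕ, a i * x ^ i)))
        ≤ ∑' i : ℕ, (a i * x ^ i) * Real.exp (c * i) := hjen
      _ = ∑' i : ℕ, a i * (Real.exp c * x) ^ i := (tsum_congr hpow).symm
  -- measurability of u
  have hfm : Measurable f := by
    apply measurable_of_tendsto_metrizable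
      (f := fun N y => ∑ i ∈ Finset.range N, a i * y ^ i)
    · intro N
      exact Finset.measurable_sum _ (fun i _ => (measurable_id.pow_const i).const_mul (a i))
    · rw [tendsto_pi_nhds]
      intro y
      rw [hf y]
      exact (hSa y).hasSum.tendsto_sum_nat
  have hum : Measurable u := by
    have h1 : Measurable (deriv f) := measurable_deriv f
    have : u = fun x => x * deriv f x / f x := funext hu
    rw [this]
    exact (measurable_id.mul h1).div hfm
  -- the main estimate
  intro t ht
  set s : ℝ := Real.exp (-t) with hs_def
  have hs0 : 0 < s := Real.exp_pos _
  have hs1 : s < 1 := Real.exp_lt_one_iff.mpr (by linarith)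
  have hsE : s * Real.exp t = 1 := by rw [hs_def, ← Real.exp_add]; simp
  have hval := hbal s ⟨hs0.le, hs1⟩
  have h1s : 0 < 1 - s := by linarith
  -- integrability of the quotient
  have hIq : IntegrableOn (fun x => f (s * x) / f x) (Set.Ioi 0) := by
    by_contra hni
    rw [integral_undef hni] at hval
    have : (1:ℝ) ≤ 1 / (1 - s) := by
      rw [le_div_iff₀ h1s]; linarith
    linarith
  -- pointwise comparisons
  have hub : ∀ x : ℝ, 0 < x → Real.exp (-t * u x) ≤ f (s * x) / f x := by
    intro x hx
    rw [le_div_iff₀ (hfpos x hx)]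
    have := hkey x hx (-t)
    rw [← hs_def] at this
    linarith [this]
  have hlb : ∀ x : ℝ, 0 < x → f (s * x) / f x ≤ Real.exp (-t * u (s * x)) := by
    intro x hx
    have hsx : 0 < s * x := mul_pos hs0 hx
    have h2 := hkey (s * x) hsx t
    have h3 : Real.exp t * (s * x) = x := by
      rw [← mul_assoc, mul_comm (Real.exp t) s, hsE, one_mul]
    rw [h3] at h2
    rw [div_le_iff₀ (hfpos x hx)]
    have he : Real.exp (-t * u (s*x)) * Real.exp (t * u (s*x)) = 1 := by
      rw [← Real.exp_add]; ring_nf; exact Real.exp_zero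
    have h4 := mul_le_mul_of_nonneg_left h2 (Real.exp_pos (-t * u (s*x))).le
    have h5 : Real.exp (-t * u (s*x)) * (f (s*x) * Real.exp (t * u (s*x))) = f (s*x) := by
      calc Real.exp (-t * u (s*x)) * (f (s*x) * Real.exp (t * u (s*x)))
          = f (s*x) * (Real.exp (-t * u (s*x)) * Real.exp (t * u (s*x))) := by ring
        _ = f (s*x) := by rw [he, mul_one]
    linarith
  -- integrability of exp(-t u)
  have hmeas : AEStronglyMeasurable (fun x => Real.exp (-t * u x)) (volume.restrict (Set.Ioi 0)) :=
    (Real.measurable_exp.comp (hum.const_mul (-t))).aestronglyMeasurable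
  have hIu : IntegrableOn (fun x => Real.exp (-t * u x)) (Set.Ioi 0) := by
    apply Integrable.mono' hIq hmeas
    filter_upwards [ae_restrict_mem measurableSet_Ioi] with x hx
    rw [Real.norm_eq_abs, abs_of_pos (Real.exp_pos _)]
    exact hub x hx
  set I : ℝ := ∫ x in Set.Ioi (0:ℝ), Real.exp (-t * u x) with hI_def
  -- upper bound on I
  have hIub : I ≤ 1 / (1 - s) - β := by
    rw [hI_def, ← hval]
    apply integral_mono_of_nonneg
    · filter_upwards with x
      exact (Real.exp_pos _).le
    · exact hIq
    · filter_upwards [ae_restrict_mem measurableSet_Ioi] with x hx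
      exact hub x hx
  -- lower bound on I
  have hcomp : (∫ x in Set.Ioi (0:ℝ), Real.exp (-t * u (s * x))) = s⁻¹ * I := by
    have := integral_comp_mul_left_Ioi (fun y => Real.exp (-t * u y)) 0 hs0
    rw [mul_zero] at this
    rw [this, smul_eq_mul, hI_def]
  have hIsx : IntegrableOn (fun x => Real.exp (-t * u (s * x))) (Set.Ioi 0) := by
    exact (integrableOn_Ioi_comp_mul_left_iff (fun y => Real.exp (-t * u y)) 0 hs0).mpr
      (by simpa using hIu)
  have hIlb : 1 / (1 - s) - β ≤ s⁻¹ * I := by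
    rw [← hval, ← hcomp]
    apply integral_mono_of_nonneg
    · filter_upwards [ae_restrict_mem measurableSet_Ioi] with x hx
      have hx' : (0:ℝ) < x := hx
      have hsx : 0 < s * x := mul_pos hs0 hx'
      exact div_nonneg (hfpos _ hsx).le (hfpos _ hx').le
    · exact hIsx
    · filter_upwards [ae_restrict_mem measurableSet_Ioi] with x hx
      exact hlb x hx
  -- numeric inequalities
  have hq : (1/t) * t = 1 := by field_simp
  have hts : 1 - s ≤ t := by
    have := Real.add_one_le_exp (-t); rw [← hs_def] at this; linarith
  have hst : s * (1 + t) ≤ 1 := by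
    have h1 : (1:ℝ) + t ≤ Real.exp t := by linarith [Real.add_one_le_exp t]
    calc s * (1 + t) ≤ s * Real.exp t := mul_le_mul_of_nonneg_left h1 hs0.le
      _ = 1 := hsE
  have hup_num : 1 / (1 - s) ≤ 1/t + 1 := by
    rw [div_le_iff₀ h1s]
    nlinarith [mul_le_mul_of_nonneg_left hst (le_of_lt (show (0:ℝ) < 1/t by positivity))]
  have hlo_num : 1/t - 1 ≤ s / (1 - s) := by
    rw [le_div_iff₀ h1s]
    nlinarith [mul_le_mul_of_nonneg_left hts (le_of_lt (show (0:ℝ) < 1/t by positivity))]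
  have hI_lower : s / (1 - s) - β ≤ I := by
    have := mul_le_mul_of_nonneg_left hIlb hs0.le
    rw [← mul_assoc, mul_inv_cancel₀ hs0.ne', one_mul] at this
    have hsb : s * β ≤ β := by nlinarith
    calc s / (1 - s) - β ≤ s * (1 / (1 - s) - β) := by
          rw [mul_sub, mul_one_div]; nlinarith
      _ ≤ I := this
  rw [abs_le]
  constructor
  · linarith [hI_lower, hlo_num]
  · linarith [hIub, hup_num]
end

section
/- Let g: [0,∞) → ℝ be C^1 with g(0) = 0, g'(0) = 0, piecewise C^2, and M_1 ≤ g'' ≤ M_2 for constants 0 < M_1 < M_2 < ∞. Define a(g) = ∫_0^∞ e^{-g(t)} dt, b(g) = ∫_0^∞ t^2 e^{-g(t)} dt, and d(g) = b(g)/(4 a(g)^3). Then 1/12 < d(g) < 1/2. -/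
open MeasureTheory Real Set

lemma aux_bounds (g : ℝ → ℝ) (M : ℝ)
    (hC1 : ContDiffOn ℝ 1 g (Set.Ici 0))
    (hg0 : g 0 = 0)
    (hb : ∀ t : ℝ, 0 ≤ t → derivWithin g (Set.Ici 0) t ≤ M * t) :
    ∀ x : ℝ, 0 ≤ x → g x ≤ M * x ^ 2 / 2 := by
  have hgc : ContinuousOn g (Ici 0) := hC1.continuousOn
  have hder : ∀ x : ℝ, 0 < x → HasDerivAt g (derivWithin g (Ici 0) x) x := by
    intro x hx
    exact ((hC1.differentiableOn one_ne_zero x (le_of_lt hx)).hasDerivWithinAt).hasDerivAt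
      (Ici_mem_nhds hx)
  have hmono : MonotoneOn (fun x => M * x ^ 2 / 2 - g x) (Ici 0) := by
    apply monotoneOn_of_deriv_nonneg (convex_Ici 0)
    · exact ((continuous_const.mul (continuous_pow 2)).div_const 2).continuousOn.sub hgc
    · rw [interior_Ici]
      intro x hx
      have hF : HasDerivAt (fun x => M * x ^ 2 / 2 - g x)
          (M * x - derivWithin g (Ici 0) x) x := by
        have h1 : HasDerivAt (fun x : ℝ => M * x ^ 2 / 2) (M * x) x := by
          have := ((hasDerivAt_pow 2 x).const_mul M).div_const 2
          refine this.congr_deriv ?_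
          ring
        exact h1.sub (hder x hx)
      exact hF.differentiableAt.differentiableWithinAt
    · rw [interior_Ici]
      intro x hx
      have hF : HasDerivAt (fun x => M * x ^ 2 / 2 - g x)
          (M * x - derivWithin g (Ici 0) x) x := by
        have h1 : HasDerivAt (fun x : ℝ => M * x ^ 2 / 2) (M * x) x := by
          have := ((hasDerivAt_pow 2 x).const_mul M).div_const 2
          refine this.congr_deriv ?_
          ring
        exact h1.sub (hder x hx)
      rw [hF.deriv]
      have := hb x hx.le
      linarith
  intro x hx
  have := hmono (self_mem_Ici) hx hx
  simp only [hg0] at this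
  nlinarith [this]

lemma aux_bounds_lower (g : ℝ → ℝ) (M : ℝ)
    (hC1 : ContDiffOn ℝ 1 g (Set.Ici 0))
    (hg0 : g 0 = 0)
    (hb : ∀ t : ℝ, 0 ≤ t → M * t ≤ derivWithin g (Set.Ici 0) t) :
    ∀ x : ℝ, 0 ≤ x → M * x ^ 2 / 2 ≤ g x := by
  have hgc : ContinuousOn g (Ici 0) := hC1.continuousOn
  have hder : ∀ x : ℝ, 0 < x → HasDerivAt g (derivWithin g (Ici 0) x) x := by
    intro x hx
    exact ((hC1.differentiableOn one_ne_zero x (le_of_lt hx)).hasDerivWithinAt).hasDerivAt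
      (Ici_mem_nhds hx)
  have hmono : MonotoneOn (fun x => g x - M * x ^ 2 / 2) (Ici 0) := by
    apply monotoneOn_of_deriv_nonneg (convex_Ici 0)
    · exact hgc.sub ((continuous_const.mul (continuous_pow 2)).div_const 2).continuousOn
    · rw [interior_Ici]
      intro x hx
      have hF : HasDerivAt (fun x => g x - M * x ^ 2 / 2)
          (derivWithin g (Ici 0) x - M * x) x := by
        have h1 : HasDerivAt (fun x : ℝ => M * x ^ 2 / 2) (M * x) x := by
          have := ((hasDerivAt_pow 2 x).const_mul M).div_const 2
          refine this.congr_deriv ?_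
          ring
        exact (hder x hx).sub h1
      exact hF.differentiableAt.differentiableWithinAt
    · rw [interior_Ici]
      intro x hx
      have hF : HasDerivAt (fun x => g x - M * x ^ 2 / 2)
          (derivWithin g (Ici 0) x - M * x) x := by
        have h1 : HasDerivAt (fun x : ℝ => M * x ^ 2 / 2) (M * x) x := by
          have := ((hasDerivAt_pow 2 x).const_mul M).div_const 2
          refine this.congr_deriv ?_
          ring
        exact (hder x hx).sub h1
      rw [hF.deriv]
      have := hb x hx.le
      linarith
  intro x hx
  have := hmono (self_mem_Ici) hx hx
  simp only [hg0] at this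
  nlinarith [this]

lemma aux_slope (g : ℝ → ℝ)
    (hC1 : ContDiffOn ℝ 1 g (Set.Ici 0))
    (hg0 : g 0 = 0)
    (hmono : MonotoneOn (derivWithin g (Set.Ici 0)) (Set.Ici 0)) :
    ∀ s t : ℝ, 0 < s → s ≤ t → t * g s ≤ s * g t := by
  have hgc : ContinuousOn g (Ici 0) := hC1.continuousOn
  have hder : ∀ x : ℝ, 0 < x → HasDerivAt g (derivWithin g (Ici 0) x) x := by
    intro x hx
    exact ((hC1.differentiableOn one_ne_zero x (le_of_lt hx)).hasDerivWithinAt).hasDerivAt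
      (Ici_mem_nhds hx)
  have hconv : ConvexOn ℝ (Ici 0) g := by
    apply MonotoneOn.convexOn_of_deriv (convex_Ici 0) hgc
    · rw [interior_Ici]
      exact fun x hx => (hder x hx).differentiableAt.differentiableWithinAt
    · rw [interior_Ici]
      intro x hx y hy hxy
      rw [(hder x hx).deriv, (hder y hy).deriv]
      exact hmono (mem_Ici.2 (le_of_lt hx)) (mem_Ici.2 (le_of_lt hy)) hxy
  intro s t hs hst
  have ht : 0 < t := lt_of_lt_of_le hs hst
  have hw1 : (0:ℝ) ≤ 1 - s / t := by
    rw [sub_nonneg]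
    exact div_le_one_of_le₀ hst ht.le
  have hw2 : (0:ℝ) ≤ s / t := by positivity
  have key := hconv.2 (self_mem_Ici (a := (0:ℝ))) (mem_Ici.2 ht.le) hw1 hw2 (by ring)
  simp only [smul_eq_mul, mul_zero, zero_add, hg0] at key
  rw [div_mul_cancel₀ _ ht.ne'] at key
  have := mul_le_mul_of_nonneg_left key ht.le
  calc t * g s ≤ t * (s / t * g t) := this
    _ = s * g t := by field_simp

lemma aux_exp_int1 {L : ℝ} (hL : 0 < L) :
    ∫ t in Set.Ioi (0:ℝ), Real.exp (-(L * t)) = 1 / L := by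
  have h := integral_exp_neg_mul_rpow (p := 1) (b := L) one_pos hL
  simp only [rpow_one, neg_mul] at h
  rw [h, show (1:ℝ)/1+1 = 2 by norm_num, Real.Gamma_two]
  rw [show (-1:ℝ)/1 = -1 by norm_num, rpow_neg_one]
  rw [one_div, mul_one]

lemma aux_exp_int2 {L : ℝ} (hL : 0 < L) :
    ∫ t in Set.Ioi (0:ℝ), t ^ 2 * Real.exp (-(L * t)) = 2 / L ^ 3 := by
  have h := integral_rpow_mul_exp_neg_mul_rpow (p := 1) (q := 2) (b := L) one_pos (by norm_num) hL
  simp only [rpow_one, neg_mul] at h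
  have heq : ∀ t ∈ Set.Ioi (0:ℝ), t ^ (2:ℝ) * Real.exp (-(L * t)) = t ^ 2 * Real.exp (-(L * t)) := by
    intro t ht
    rw [show (2:ℝ) = ((2:ℕ):ℝ) by norm_num, rpow_natCast]
  rw [setIntegral_congr_fun measurableSet_Ioi heq] at h
  rw [h]
  have hG : Real.Gamma ((2 + 1) / 1) = 2 := by
    rw [show ((2:ℝ) + 1) / 1 = ((2:ℕ):ℝ) + 1 by norm_num, Real.Gamma_nat_eq_factorial]
    norm_num
  rw [hG]
  rw [show -((2:ℝ)+1)/1 = ((-3 : ℤ) : ℝ) by norm_num, rpow_intCast, zpow_neg]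
  norm_num [inv_pow]
  rw [inv_mul_eq_div]
  try rfl
  try norm_num

set_option maxHeartbeats 1000000 in
theorem stmt4 (g : ℝ → ℝ) (M₁ M₂ : ℝ) (h1 : 0 < M₁) (h12 : M₁ < M₂)
    (hC1 : ContDiffOn ℝ 1 g (Set.Ici 0))
    (hg0 : g 0 = 0) (hg'0 : derivWithin g (Set.Ici 0) 0 = 0)
    (hsd : ∀ s t : ℝ, 0 ≤ s → s ≤ t →
      M₁ * (t - s) ≤ derivWithin g (Set.Ici 0) t - derivWithin g (Set.Ici 0) s ∧
      derivWithin g (Set.Ici 0) t - derivWithin g (Set.Ici 0) s ≤ M₂ * (t - s)) :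
    1/12 < (∫ t in Set.Ioi (0:ℝ), t^2 * Real.exp (-g t)) /
      (4 * (∫ t in Set.Ioi (0:ℝ), Real.exp (-g t))^3) ∧
    (∫ t in Set.Ioi (0:ℝ), t^2 * Real.exp (-g t)) /
      (4 * (∫ t in Set.Ioi (0:ℝ), Real.exp (-g t))^3) < 1/2 := by
  have hgc : ContinuousOn g (Ici 0) := hC1.continuousOn
  -- pointwise bounds on g
  have hg_ub : ∀ x : ℝ, 0 ≤ x → g x ≤ M₂ * x ^ 2 / 2 := by
    apply aux_bounds g M₂ hC1 hg0
    intro t ht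
    have := (hsd 0 t le_rfl ht).2
    rw [hg'0] at this
    linarith
  have hg_lb : ∀ x : ℝ, 0 ≤ x → M₁ * x ^ 2 / 2 ≤ g x := by
    apply aux_bounds_lower g M₁ hC1 hg0
    intro t ht
    have := (hsd 0 t le_rfl ht).1
    rw [hg'0] at this
    linarith
  have hg_nonneg : ∀ x : ℝ, 0 ≤ x → 0 ≤ g x := by
    intro x hx
    refine le_trans ?_ (hg_lb x hx)
    positivity
  have hslope : ∀ s t : ℝ, 0 < s → s ≤ t → t * g s ≤ s * g t := by
    apply aux_slope g hC1 hg0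
    intro x hx y hy hxy
    have := (hsd x y hx hxy).1
    nlinarith
  -- measurability and integrability
  have hfm : AEStronglyMeasurable (fun t => Real.exp (-g t)) (volume.restrict (Ioi 0)) := by
    apply ContinuousOn.aestronglyMeasurable ?_ measurableSet_Ioi
    exact Real.continuous_exp.comp_continuousOn (hgc.mono (Ioi_subset_Ici le_rfl)).neg
  have hint_a : IntegrableOn (fun t => Real.exp (-g t)) (Ioi 0) := by
    apply Integrable.mono' ((integrable_exp_neg_mul_sq (half_pos h1)).integrableOn) hfm
    filter_upwards [ae_restrict_mem measurableSet_Ioi] with t ht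
    rw [Real.norm_eq_abs, Real.abs_exp]
    apply Real.exp_le_exp.2
    have := hg_lb t (le_of_lt ht)
    linarith
  have hmaj2 : IntegrableOn (fun t : ℝ => t ^ 2 * Real.exp (-(M₁/2) * t ^ 2)) (Ioi 0) := by
    have h := (integrable_rpow_mul_exp_neg_mul_sq (half_pos h1) (s := 2)
      (by norm_num)).integrableOn (s := Ioi 0)
    apply h.congr_fun ?_ measurableSet_Ioi
    intro t ht
    norm_num [Real.rpow_natCast]
  have hint_b : IntegrableOn (fun t => t ^ 2 * Real.exp (-g t)) (Ioi 0) := by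
    apply Integrable.mono' hmaj2
      (((continuous_pow 2).aestronglyMeasurable.restrict).mul hfm)
    filter_upwards [ae_restrict_mem measurableSet_Ioi] with t ht
    show ‖t ^ 2 * Real.exp (-g t)‖ ≤ t ^ 2 * Real.exp (-(M₁/2) * t ^ 2)
    rw [Real.norm_eq_abs, abs_of_nonneg (by positivity)]
    apply mul_le_mul_of_nonneg_left _ (sq_nonneg t)
    apply Real.exp_le_exp.2
    have := hg_lb t (le_of_lt ht)
    linarith
  set A := ∫ t in Set.Ioi (0:ℝ), Real.exp (-g t) with hA
  set B := ∫ t in Set.Ioi (0:ℝ), t ^ 2 * Real.exp (-g t) with hB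
  have hA_pos : 0 < A := by
    rw [hA, setIntegral_pos_iff_support_of_nonneg_ae ?_ hint_a]
    · have hs : Function.support (fun t : ℝ => Real.exp (-g t)) = univ := by
        ext t; simp [Real.exp_ne_zero]
      rw [hs, univ_inter, Real.volume_Ioi]
      exact ENNReal.zero_lt_top
    · filter_upwards with t using (Real.exp_pos _).le
  -- LOWER BOUND : A^3/3 < B
  have hlow : A ^ 3 / 3 < B := by
    set F := fun t : ℝ => Real.exp (-g t) * (t ^ 2 - A ^ 2) with hF
    have hFexp : F = fun t => t ^ 2 * Real.exp (-g t) - A ^ 2 * Real.exp (-g t) := by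
      funext t; rw [hF]; ring
    have hFint : IntegrableOn F (Ioi 0) := by
      rw [hFexp]; exact hint_b.sub (hint_a.const_mul _)
    have hunion : Ioc 0 A ∪ Ioi A = Ioi (0:ℝ) := Ioc_union_Ioi_eq_Ioi hA_pos.le
    have hFint1 : IntegrableOn F (Ioc 0 A) :=
      hFint.mono_set (by rw [← hunion]; exact subset_union_left)
    have hFint2 : IntegrableOn F (Ioi A) :=
      hFint.mono_set (by rw [← hunion]; exact subset_union_right)
    have hsplit : ∫ t in Ioi (0:ℝ), F t = (∫ t in Ioc 0 A, F t) + ∫ t in Ioi A, F t := by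
      rw [← setIntegral_union (Ioc_disjoint_Ioi le_rfl) measurableSet_Ioi hFint1 hFint2, hunion]
    have hFtot : ∫ t in Ioi (0:ℝ), F t = B - A ^ 2 * A := by
      rw [hFexp, integral_sub hint_b (hint_a.const_mul _), integral_const_mul, ← hA, ← hB]
    have h1 : ∫ t in Ioc (0:ℝ) A, (t ^ 2 - A ^ 2) ≤ ∫ t in Ioc (0:ℝ) A, F t := by
      apply setIntegral_mono_on ?_ hFint1 measurableSet_Ioc
      · intro t ht
        have hf1 : Real.exp (-g t) ≤ 1 := by
          rw [show (1:ℝ) = Real.exp 0 by simp]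
          exact Real.exp_le_exp.2 (by linarith [hg_nonneg t ht.1.le])
        have h2 : t ^ 2 - A ^ 2 ≤ 0 := by nlinarith [ht.1, ht.2]
        show t ^ 2 - A ^ 2 ≤ Real.exp (-g t) * (t ^ 2 - A ^ 2)
        nlinarith [Real.exp_pos (-g t)]
      · exact ((continuous_pow 2).sub continuous_const).integrableOn_Ioc
    have hcomp : ∫ t in Ioc (0:ℝ) A, (t ^ 2 - A ^ 2) = A ^ 3 / 3 - A ^ 3 := by
      rw [← intervalIntegral.integral_of_le hA_pos.le]
      rw [intervalIntegral.integral_sub ((continuous_pow 2).intervalIntegrable _ _)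
        (intervalIntegrable_const)]
      rw [integral_pow, intervalIntegral.integral_const]
      norm_num
      ring
    have h2 : 0 < ∫ t in Ioi A, F t := by
      rw [setIntegral_pos_iff_support_of_nonneg_ae ?_ hFint2]
      · refine lt_of_lt_of_le ?_
          (measure_mono (?_ : Ioi A ⊆ Function.support F ∩ Ioi A))
        · rw [Real.volume_Ioi]
          exact ENNReal.zero_lt_top
        · intro t ht
          refine ⟨ne_of_gt ?_, ht⟩
          have h3 : (0:ℝ) < t ^ 2 - A ^ 2 := by nlinarith [mem_Ioi.1 ht, hA_pos]
          show (0:ℝ) < Real.exp (-g t) * (t ^ 2 - A ^ 2)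
          exact mul_pos (Real.exp_pos _) h3
      · filter_upwards [ae_restrict_mem measurableSet_Ioi] with t ht
        have h3 : (0:ℝ) ≤ t ^ 2 - A ^ 2 := by nlinarith [mem_Ioi.1 ht, hA_pos]
        show (0:ℝ) ≤ Real.exp (-g t) * (t ^ 2 - A ^ 2)
        exact mul_nonneg (Real.exp_pos _).le h3
    nlinarith [hsplit, hFtot, h1, hcomp, h2]
  -- UPPER BOUND : B < 2 * A^3
  have hup : B < 2 * A ^ 3 := by
    set L : ℝ := 1 / A with hL
    have hLpos : 0 < L := by rw [hL]; positivity
    set S : Set ℝ := {t : ℝ | 0 < t ∧ L * t < g t} with hS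
    have hM₂ : (0:ℝ) < M₂ := h1.trans h12
    have hSne : S.Nonempty := by
      have hx : (0:ℝ) < 2 * L / M₁ + 1 := by
        have : (0:ℝ) < 2 * L / M₁ := div_pos (by linarith) h1
        linarith
      refine ⟨2 * L / M₁ + 1, hx, ?_⟩
      have hlb := hg_lb (2 * L / M₁ + 1) hx.le
      have h4 : 2 * L < M₁ * (2 * L / M₁ + 1) := by
        rw [mul_add, mul_div_cancel₀ _ h1.ne']
        nlinarith
      nlinarith [mul_pos hx (sub_pos.2 h4)]
    have hbdd : BddBelow S := ⟨0, fun t ht => ht.1.le⟩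
    have hlbS : ∀ t ∈ S, 2 * L / M₂ ≤ t := by
      intro t ht
      by_contra hcon
      push_neg at hcon
      have h5 := hg_ub t ht.1.le
      have h6 : M₂ * t < 2 * L := by
        have := (lt_div_iff₀ hM₂).1 hcon
        linarith
      nlinarith [ht.2, ht.1, mul_pos ht.1 (sub_pos.2 h6)]
    set t₀ : ℝ := sInf S with ht₀
    have ht₀_ge : 2 * L / M₂ ≤ t₀ := le_csInf hSne hlbS
    have ht₀_pos : 0 < t₀ :=
      lt_of_lt_of_le (div_pos (by linarith) hM₂) ht₀_ge
    set Φ := fun t : ℝ => (Real.exp (-g t) - Real.exp (-(L * t))) * (t₀ ^ 2 - t ^ 2) with hΦ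
    have hpt : ∀ t ∈ Ioi (0:ℝ), 0 ≤ Φ t := by
      intro t ht
      have htpos : (0:ℝ) < t := ht
      rcases lt_trichotomy t t₀ with h | h | h
      · have htS : t ∉ S := fun hmem => absurd (csInf_le hbdd hmem) (not_le.2 h)
        have hle : g t ≤ L * t := by
          by_contra hc
          push_neg at hc
          exact htS ⟨htpos, hc⟩
        show 0 ≤ (Real.exp (-g t) - Real.exp (-(L * t))) * (t₀ ^ 2 - t ^ 2)
        apply mul_nonneg (sub_nonneg.2 (Real.exp_le_exp.2 (by linarith)))
        nlinarith [ht₀_pos]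
      · show 0 ≤ (Real.exp (-g t) - Real.exp (-(L * t))) * (t₀ ^ 2 - t ^ 2)
        rw [h]
        simp
      · obtain ⟨s, hsS, hst⟩ := exists_lt_of_csInf_lt hSne h
        have hgt : L * t < g t := by
          have hsl := hslope s t hsS.1 hst.le
          have h7 : t * (L * s) < t * g s := mul_lt_mul_of_pos_left hsS.2 htpos
          have h8 : s * (L * t) < s * g t := by nlinarith
          exact lt_of_mul_lt_mul_left (by linarith) hsS.1.le
        show 0 ≤ (Real.exp (-g t) - Real.exp (-(L * t))) * (t₀ ^ 2 - t ^ 2)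
        have e1 : Real.exp (-g t) ≤ Real.exp (-(L * t)) :=
          Real.exp_le_exp.2 (by linarith)
        have e2 : (0:ℝ) ≤ t ^ 2 - t₀ ^ 2 := by nlinarith [ht₀_pos]
        nlinarith [mul_nonneg (sub_nonneg.2 e1) e2]
    have hint_h : IntegrableOn (fun t : ℝ => Real.exp (-(L * t))) (Ioi 0) := by
      have := exp_neg_integrableOn_Ioi 0 hLpos
      apply this.congr_fun ?_ measurableSet_Ioi
      intro t ht
      simp [neg_mul]
    have hint_th : IntegrableOn (fun t : ℝ => t ^ 2 * Real.exp (-(L * t))) (Ioi 0) := by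
      have h := integrableOn_rpow_mul_exp_neg_mul_rpow (s := 2) (p := 1) (by norm_num)
        one_pos hLpos
      apply h.congr_fun ?_ measurableSet_Ioi
      intro t ht
      norm_num [Real.rpow_natCast, Real.rpow_one, neg_mul]
    have hΦexp : Φ = fun t => (t₀ ^ 2 * Real.exp (-g t) - t₀ ^ 2 * Real.exp (-(L * t)))
        - (t ^ 2 * Real.exp (-g t) - t ^ 2 * Real.exp (-(L * t))) := by
      funext t; rw [hΦ]; ring
    have hΦint : IntegrableOn Φ (Ioi 0) := by
      rw [hΦexp]
      exact ((hint_a.const_mul _).sub (hint_h.const_mul _)).sub (hint_b.sub hint_th)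
    have hIh : ∫ t in Ioi (0:ℝ), Real.exp (-(L * t)) = A := by
      rw [aux_exp_int1 hLpos, hL, one_div_one_div]
    have hIth : ∫ t in Ioi (0:ℝ), t ^ 2 * Real.exp (-(L * t)) = 2 * A ^ 3 := by
      rw [aux_exp_int2 hLpos, hL, div_pow, one_pow]
      rw [one_div, div_eq_mul_inv, inv_inv]
    have e0 : IntegrableOn
        (fun t : ℝ => t₀ ^ 2 * Real.exp (-g t) - t₀ ^ 2 * Real.exp (-(L * t))) (Ioi 0) :=
      (hint_a.const_mul _).sub (hint_h.const_mul _)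
    have e0' : IntegrableOn
        (fun t : ℝ => t ^ 2 * Real.exp (-g t) - t ^ 2 * Real.exp (-(L * t))) (Ioi 0) :=
      hint_b.sub hint_th
    have hΦtot : ∫ t in Ioi (0:ℝ), Φ t = 2 * A ^ 3 - B := by
      rw [hΦexp, integral_sub e0 e0',
        integral_sub (hint_a.const_mul _) (hint_h.const_mul _),
        integral_sub hint_b hint_th, integral_const_mul, integral_const_mul,
        hIh, hIth, ← hA, ← hB]
      ring
    have hΦpos : 0 < ∫ t in Ioi (0:ℝ), Φ t := by
      rw [setIntegral_pos_iff_support_of_nonneg_ae ?_ hΦint]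
      · refine lt_of_lt_of_le ?_
          (measure_mono (?_ : Ioo 0 (2 * L / M₂) ⊆ Function.support Φ ∩ Ioi 0))
        · rw [Real.volume_Ioo, ENNReal.ofReal_pos]
          have : (0:ℝ) < 2 * L / M₂ := div_pos (by linarith) hM₂
          linarith
        · intro t ht
          obtain ⟨ht1, ht2⟩ := ht
          refine ⟨ne_of_gt ?_, ht1⟩
          have hub := hg_ub t ht1.le
          have h9 : M₂ * t < 2 * L := by
            have := (lt_div_iff₀ hM₂).1 ht2
            linarith
          have h10 : g t < L * t := by
            nlinarith [mul_pos ht1 (sub_pos.2 h9)]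
          have h11 : t < t₀ := lt_of_lt_of_le ht2 ht₀_ge
          show (0:ℝ) < (Real.exp (-g t) - Real.exp (-(L * t))) * (t₀ ^ 2 - t ^ 2)
          apply mul_pos
          · rw [sub_pos]
            exact Real.exp_lt_exp.2 (by linarith)
          · nlinarith
      · filter_upwards [ae_restrict_mem measurableSet_Ioi] with t ht using hpt t ht
    linarith [hΦtot ▸ hΦpos]
  have hA3 : (0:ℝ) < 4 * A ^ 3 := by nlinarith [pow_pos hA_pos 3]
  constructor
  · rw [lt_div_iff₀ hA3]
    nlinarith
  · rw [div_lt_iff₀ hA3]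
    nlinarith
end

section
/- For all x ≥ 0, the complementary error function satisfies √π e^{x²} erfc(x) > 2/(x + √(x² + 2)), where erfc(x) = (2/√π) ∫_x^∞ e^{-t²} dt. -/
open MeasureTheory Real Set Filter Topology

noncomputable def Fd (t : ℝ) : ℝ := t + Real.sqrt (t^2 + 2)
noncomputable def Ff (t : ℝ) : ℝ := Real.exp (-t^2) * (Fd t)⁻¹
noncomputable def Ff' (t : ℝ) : ℝ :=
  Real.exp (-t^2) * (-(2*t)) * (Fd t)⁻¹ +
    Real.exp (-t^2) * (-(1 + 1/(2*Real.sqrt (t^2+2))*(2*t)) / (Fd t)^2)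

lemma hs_pos (t : ℝ) : 0 < Real.sqrt (t^2+2) := Real.sqrt_pos.mpr (by positivity)
lemma hs_sq (t : ℝ) : Real.sqrt (t^2+2)^2 = t^2+2 := Real.sq_sqrt (by positivity)
lemma hst (t : ℝ) : t < Real.sqrt (t^2+2) := by
  nlinarith [hs_pos t, hs_sq t, sq_nonneg (t - Real.sqrt (t^2+2))]
lemma hFd_pos (t : ℝ) : 0 < Fd t := by
  have h1 := hs_pos t; have h2 := hs_sq t; have h3 := hst t
  unfold Fd; nlinarith [h1, h2, h3]

lemma hderiv (t : ℝ) : HasDerivAt Ff (Ff' t) t := by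
  have hu : HasDerivAt (fun t : ℝ => t^2 + 2) (2*t) t := by
    simpa using (hasDerivAt_pow 2 t).add_const 2
  have hsq : HasDerivAt (fun t : ℝ => Real.sqrt (t^2+2)) (1/(2*Real.sqrt (t^2+2)) * (2*t)) t :=
    (Real.hasDerivAt_sqrt (by positivity)).comp t hu
  have hd : HasDerivAt Fd (1 + 1/(2*Real.sqrt (t^2+2))*(2*t)) t :=
    (hasDerivAt_id t).add hsq
  have hinv := hd.inv (ne_of_gt (hFd_pos t))
  have hexp : HasDerivAt (fun t : ℝ => Real.exp (-t^2)) (Real.exp (-t^2) * (-(2*t))) t := by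
    have h : HasDerivAt (fun t : ℝ => -t^2) (-(2*t)) t := by
      have h0 : HasDerivAt (fun x : ℝ => -x^2) _ t := (hasDerivAt_pow 2 t).neg
      simpa using h0
    exact h.exp
  have h0 : HasDerivAt Ff _ t := hexp.mul hinv
  simpa [Ff, Ff'] using h0

lemma numer_eq (t : ℝ) :
    (t + Real.sqrt (t^2+2))^2 * Real.sqrt (t^2+2)
      - 2*t*(t + Real.sqrt (t^2+2))*Real.sqrt (t^2+2) - (Real.sqrt (t^2+2) + t)
      = Real.sqrt (t^2+2) - t := by
  linear_combination Real.sqrt (t^2+2) * hs_sq t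

lemma hpos (t : ℝ) : 0 < Real.exp (-t^2) + Ff' t := by
  have h1 := hs_pos t; have h3 := hst t
  have hd : 0 < t + Real.sqrt (t^2+2) := hFd_pos t
  have he := Real.exp_pos (-t^2)
  have expand : Real.exp (-t^2) + Ff' t
      = Real.exp (-t^2) * ((t + Real.sqrt (t^2+2))^2 * Real.sqrt (t^2+2)
          - 2*t*(t + Real.sqrt (t^2+2))*Real.sqrt (t^2+2) - (Real.sqrt (t^2+2) + t))
        / ((t + Real.sqrt (t^2+2))^2 * Real.sqrt (t^2+2)) := by
    rw [Ff', Fd]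
    field_simp
    ring
  rw [expand, numer_eq]
  apply div_pos (mul_pos he (by linarith)) (by positivity)

lemma hFf'_neg_eq (t : ℝ) :
    Ff' t = -(Real.exp (-t^2) * (2*t*(t + Real.sqrt (t^2+2))*Real.sqrt (t^2+2)
        + (Real.sqrt (t^2+2) + t))) / ((t + Real.sqrt (t^2+2))^2 * Real.sqrt (t^2+2)) := by
  have h1 := hs_pos t
  have hd : 0 < t + Real.sqrt (t^2+2) := hFd_pos t
  rw [Ff', Fd]
  field_simp
  ring

lemma hFd_cont : Continuous Fd := by
  unfold Fd; continuity

lemma hE_cont : Continuous (fun t : ℝ => Real.exp (-t^2)) := by continuity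

lemma hFf'_cont : Continuous Ff' := by
  have hnum : Continuous (fun t : ℝ => -(1 + 1/(2*Real.sqrt (t^2+2))*(2*t))) := by
    apply Continuous.neg
    apply Continuous.add continuous_const
    apply Continuous.mul _ (by continuity)
    exact continuous_const.div (by continuity) (fun t => by positivity)
  unfold Ff'
  apply Continuous.add
  · exact (hE_cont.mul (by continuity)).mul (hFd_cont.inv₀ fun t => (hFd_pos t).ne')
  · exact hE_cont.mul (hnum.div (hFd_cont.pow 2) (fun t => pow_ne_zero 2 (hFd_pos t).ne'))

lemma hFf_cont : Continuous Ff := by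
  unfold Ff
  exact hE_cont.mul (hFd_cont.inv₀ fun t => (hFd_pos t).ne')

lemma hEexp_int : Integrable (fun t : ℝ => Real.exp (-t^2)) := by
  simpa using integrable_exp_neg_mul_sq (by norm_num : (0:ℝ) < 1)

lemma hFf'_int (x : ℝ) (hx : 0 ≤ x) : IntegrableOn Ff' (Set.Ioi x) := by
  have hmaj : IntegrableOn (fun t : ℝ => 3 * Real.exp (-t^2)) (Set.Ioi x) :=
    (hEexp_int.const_mul 3).integrableOn
  apply Integrable.mono hmaj hFf'_cont.aestronglyMeasurable.restrict
  filter_upwards [ae_restrict_mem measurableSet_Ioi] with t ht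
  have ht0 : 0 ≤ t := le_trans hx (le_of_lt ht)
  have h1 := hs_pos t; have h3 := hst t
  have hd : 0 < t + Real.sqrt (t^2+2) := hFd_pos t
  have he := Real.exp_pos (-t^2)
  have hG : 0 ≤ 2*t*(t + Real.sqrt (t^2+2))*Real.sqrt (t^2+2) + (Real.sqrt (t^2+2) + t) := by
    positivity
  rw [hFf'_neg_eq t, Real.norm_eq_abs, Real.norm_eq_abs, abs_div, abs_neg,
    abs_of_nonneg (mul_nonneg he.le hG), abs_of_pos (by positivity :
      (0:ℝ) < (t + Real.sqrt (t^2+2))^2 * Real.sqrt (t^2+2)),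
    abs_of_pos (by positivity : (0:ℝ) < 3 * Real.exp (-t^2))]
  rw [div_le_iff₀ (by positivity)]
  nlinarith [numer_eq t, mul_pos (mul_pos (mul_pos hd hd) h1) he]

lemma hFf_tendsto : Tendsto Ff atTop (𝓝 0) := by
  have h1 : Tendsto (fun t : ℝ => Real.exp (-t^2)) atTop (𝓝 0) :=
    Real.tendsto_exp_atBot.comp (tendsto_neg_atTop_atBot.comp (tendsto_pow_atTop two_ne_zero))
  have h2 : Tendsto (fun t : ℝ => (Fd t)⁻¹) atTop (𝓝 0) := by
    apply Tendsto.inv_tendsto_atTop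
    apply tendsto_atTop_mono (fun t => ?_) tendsto_id
    unfold Fd
    have := Real.sqrt_nonneg (t^2+2)
    simp only [id]
    linarith
  have := h1.mul h2
  simp only [mul_zero] at this
  exact this

lemma aux (x : ℝ) (hx : 0 ≤ x) : Ff x < ∫ t in Set.Ioi x, Real.exp (-t^2) := by
  have hFi := hFf'_int x hx
  have hint : ∫ t in Set.Ioi x, Ff' t = 0 - Ff x :=
    integral_Ioi_of_hasDerivAt_of_tendsto hFf_cont.continuousWithinAt (fun t _ => hderiv t)
      hFi hFf_tendsto
  have hEint : IntegrableOn (fun t : ℝ => Real.exp (-t^2)) (Set.Ioi x) :=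
    hEexp_int.integrableOn
  have hsum : 0 < ∫ t in Set.Ioi x, (Real.exp (-t^2) + Ff' t) := by
    rw [setIntegral_pos_iff_support_of_nonneg_ae
      (Filter.Eventually.of_forall fun t => (hpos t).le) (hEint.add hFi)]
    have hsupp : (Function.support fun t => Real.exp (-t^2) + Ff' t) ∩ Set.Ioi x
        = Set.Ioi x := by
      apply Set.inter_eq_right.mpr
      intro t _
      exact (hpos t).ne'
    rw [hsupp, Real.volume_Ioi]
    exact ENNReal.zero_lt_top
  rw [integral_add hEint hFi, hint] at hsum
  linarith

theorem stmt7 (erfc : ℝ → ℝ)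
    (herfc : ∀ x : ℝ, erfc x = 2 / Real.sqrt π * ∫ t in Set.Ioi x, Real.exp (-t^2)) :
    ∀ x : ℝ, 0 ≤ x →
      2 / (x + Real.sqrt (x^2 + 2)) < Real.sqrt π * Real.exp (x^2) * erfc x := by
  intro x hx
  rw [herfc x]
  have h := aux x hx
  have hπ : 0 < Real.sqrt π := Real.sqrt_pos.mpr Real.pi_pos
  have hd : 0 < x + Real.sqrt (x^2+2) := hFd_pos x
  have hE := Real.exp_pos (x^2)
  have heq : Real.sqrt π * Real.exp (x^2) * (2 / Real.sqrt π * ∫ t in Set.Ioi x, Real.exp (-t^2))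
      = 2 * Real.exp (x^2) * ∫ t in Set.Ioi x, Real.exp (-t^2) := by
    field_simp
  rw [heq]
  have hee : Real.exp (x^2) * Real.exp (-x^2) = 1 := by
    rw [← Real.exp_add]; simp
  have h2 : 2 * Real.exp (x^2) * Ff x = 2 / (x + Real.sqrt (x^2 + 2)) := by
    unfold Ff Fd
    rw [div_eq_mul_inv]
    calc 2 * Real.exp (x^2) * (Real.exp (-x^2) * (x + Real.sqrt (x^2+2))⁻¹)
        = 2 * (Real.exp (x^2) * Real.exp (-x^2)) * (x + Real.sqrt (x^2+2))⁻¹ := by ring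
      _ = 2 * (x + Real.sqrt (x^2+2))⁻¹ := by rw [hee]; ring
  calc 2 / (x + Real.sqrt (x^2 + 2)) = 2 * Real.exp (x^2) * Ff x := h2.symm
    _ < 2 * Real.exp (x^2) * ∫ t in Set.Ioi x, Real.exp (-t^2) :=
        mul_lt_mul_of_pos_left h (by positivity)
end

section
/- Define f₁(c) = ∫_0^∞ x(x+c)² e^{-x²/2 − cx} dx / ∫_0^∞ x e^{-x²/2 − cx} dx for c ≥ 0. Then f₁'(c) > 0 for all c ≥ 0. -/
open MeasureTheory Real Set Filter

lemma gauss_bound (n : ℕ) (x : ℝ) :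
    |x ^ n * Real.exp (-x^2/2)| ≤ ((4:ℝ)^n * n.factorial + 1) * Real.exp (-x^2/4) := by
  set C : ℝ := (4:ℝ)^n * n.factorial + 1 with hC
  have h1 : (x^2/4) ^ n / n.factorial ≤ Real.exp (x^2/4) := by
    calc (x^2/4) ^ n / n.factorial
        ≤ ∑ i ∈ Finset.range (n+1), (x^2/4) ^ i / i.factorial := by
          refine Finset.single_le_sum (f := fun i => (x^2/4) ^ i / i.factorial) ?_
            (Finset.self_mem_range_succ n)
          intro i _; positivity
      _ ≤ Real.exp (x^2/4) := Real.sum_le_exp_of_nonneg (by positivity) _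
  have hfac : (0:ℝ) < n.factorial := by positivity
  have hxn : |x| ^ n ≤ C * Real.exp (x^2/4) := by
    rcases le_or_gt (|x|) 1 with h | h
    · have h2 : |x| ^ n ≤ 1 := pow_le_one₀ (abs_nonneg x) h
      have h3 : (1:ℝ) ≤ Real.exp (x^2/4) := Real.one_le_exp (by positivity)
      have h4 : (1:ℝ) ≤ C := by
        have : (0:ℝ) ≤ (4:ℝ)^n * n.factorial := by positivity
        linarith
      nlinarith
    · have h2 : |x| ^ n ≤ (x^2) ^ n := by
        apply pow_le_pow_left₀ (abs_nonneg x)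
        nlinarith [sq_abs x]
      have h3 : (x^2)^n = (4:ℝ)^n * (x^2/4)^n := by
        rw [div_pow, ← mul_div_assoc, mul_comm ((4:ℝ)^n) _, mul_div_assoc,
          div_self (by positivity : ((4:ℝ)^n) ≠ 0), mul_one]
      have h4 : (x^2/4)^n ≤ n.factorial * Real.exp (x^2/4) := by
        rw [div_le_iff₀ hfac] at h1
        linarith [h1]
      have h5 : (0:ℝ) < (4:ℝ)^n := by positivity
      have h6 : (0:ℝ) < Real.exp (x^2/4) := Real.exp_pos _
      calc |x| ^ n ≤ (x^2)^n := h2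
        _ = (4:ℝ)^n * (x^2/4)^n := h3
        _ ≤ (4:ℝ)^n * (n.factorial * Real.exp (x^2/4)) := by
            exact mul_le_mul_of_nonneg_left h4 h5.le
        _ ≤ C * Real.exp (x^2/4) := by rw [hC]; nlinarith
  have key : |x ^ n * Real.exp (-x^2/2)| = |x| ^ n * Real.exp (-x^2/2) := by
    rw [abs_mul, abs_pow, abs_of_pos (Real.exp_pos _)]
  rw [key]
  have e2 : Real.exp (x^2/4) * Real.exp (-x^2/2) = Real.exp (-x^2/4) := by
    rw [← Real.exp_add]; ring_nf
  calc |x| ^ n * Real.exp (-x^2/2)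
      ≤ C * Real.exp (x^2/4) * Real.exp (-x^2/2) :=
        mul_le_mul_of_nonneg_right hxn (Real.exp_pos _).le
    _ = C * Real.exp (-x^2/4) := by rw [mul_assoc, e2]

lemma gauss_int (n : ℕ) : Integrable (fun x : ℝ => x ^ n * Real.exp (-x^2/2)) := by
  have hmaj : Integrable (fun x : ℝ => ((4:ℝ)^n * n.factorial + 1) * Real.exp (-x^2/4)) := by
    have : Integrable (fun x : ℝ => Real.exp (-(1/4) * x^2)) :=
      integrable_exp_neg_mul_sq (by norm_num)
    have h := this.const_mul ((4:ℝ)^n * n.factorial + 1)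
    refine h.congr ?_
    filter_upwards with x
    ring_nf
  refine hmaj.mono' ?_ ?_
  · exact ((continuous_pow n).mul
      ((continuous_id.pow 2).neg.div_const 2).rexp).aestronglyMeasurable
  · filter_upwards with x
    rw [Real.norm_eq_abs]
    exact gauss_bound n x

lemma gauss_int0 : Integrable (fun x : ℝ => Real.exp (-x^2/2)) := by
  simpa using gauss_int 0

lemma gauss_tendsto (n : ℕ) :
    Tendsto (fun x : ℝ => x ^ n * Real.exp (-x^2/2)) atTop (nhds 0) := by
  have hexp : Tendsto (fun x : ℝ => Real.exp (-x^2/4)) atTop (nhds 0) := by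
    apply Real.tendsto_exp_atBot.comp
    have : Tendsto (fun x : ℝ => x^2/4) atTop atTop :=
      (tendsto_pow_atTop (by norm_num)).atTop_div_const (by norm_num)
    have h2 := tendsto_neg_atBot_iff.mpr this
    refine h2.congr fun x => by ring
  have := hexp.const_mul ((4:ℝ)^n * n.factorial + 1)
  rw [mul_zero] at this
  exact squeeze_zero_norm (fun x => by rw [Real.norm_eq_abs]; exact gauss_bound n x) this

noncomputable def Gt (c : ℝ) : ℝ := ∫ u in Set.Ioi c, Real.exp (-u^2/2)

lemma sq_hasDeriv (x : ℝ) : HasDerivAt (fun u : ℝ => -u^2/2) (-x) x := by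
  have h := ((hasDerivAt_pow 2 x).neg.div_const 2)
  refine h.congr_deriv ?_
  ring

lemma E_hasDeriv (x : ℝ) :
    HasDerivAt (fun u : ℝ => Real.exp (-u^2/2)) (-x * Real.exp (-x^2/2)) x := by
  have h := (sq_hasDeriv x).exp
  convert h using 1
  ring

lemma tail1 (c : ℝ) :
    ∫ u in Set.Ioi c, u * Real.exp (-u^2/2) = Real.exp (-c^2/2) := by
  have hderiv : ∀ x ∈ Set.Ici c, HasDerivAt (fun u : ℝ => -Real.exp (-u^2/2))
      (x * Real.exp (-x^2/2)) x := by
    intro x _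
    have h := (E_hasDeriv x).neg
    refine h.congr_deriv ?_
    ring
  have hi : Integrable (fun x : ℝ => x * Real.exp (-x^2/2)) := by
    simpa using gauss_int 1
  have ht : Tendsto (fun x : ℝ => -Real.exp (-x^2/2)) atTop (nhds 0) := by
    simpa using (gauss_tendsto 0).neg
  have := integral_Ioi_of_hasDerivAt_of_tendsto' hderiv hi.integrableOn ht
  rw [this]
  ring

lemma tail3 (c : ℝ) :
    ∫ u in Set.Ioi c, u^3 * Real.exp (-u^2/2) = (c^2 + 2) * Real.exp (-c^2/2) := by
  have hderiv : ∀ x ∈ Set.Ici c, HasDerivAt (fun u : ℝ => -((u^2+2) * Real.exp (-u^2/2)))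
      (x^3 * Real.exp (-x^2/2)) x := by
    intro x _
    have hp : HasDerivAt (fun u : ℝ => u^2+2) (2*x) x := by
      simpa using (hasDerivAt_pow 2 x).add_const 2
    have h := (hp.mul (E_hasDeriv x)).neg
    refine h.congr_deriv ?_
    ring
  have hi : Integrable (fun x : ℝ => x^3 * Real.exp (-x^2/2)) := gauss_int 3
  have ht : Tendsto (fun x : ℝ => -((x^2+2) * Real.exp (-x^2/2))) atTop (nhds 0) := by
    have h := ((gauss_tendsto 2).add ((gauss_tendsto 0).const_mul 2)).neg
    simp only [add_zero, neg_zero, mul_zero, zero_add] at h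
    refine h.congr fun x => by ring
  have := integral_Ioi_of_hasDerivAt_of_tendsto' hderiv hi.integrableOn ht
  rw [this]
  ring

lemma tail2 (c : ℝ) :
    ∫ u in Set.Ioi c, u^2 * Real.exp (-u^2/2) = c * Real.exp (-c^2/2) + Gt c := by
  have hderiv : ∀ x ∈ Set.Ici c, HasDerivAt (fun u : ℝ => -(u * Real.exp (-u^2/2)))
      ((x^2 - 1) * Real.exp (-x^2/2)) x := by
    intro x _
    have h := ((hasDerivAt_id x).mul (E_hasDeriv x)).neg
    refine h.congr_deriv ?_
    simp only [id_eq]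
    ring
  have hi2 : Integrable (fun x : ℝ => x^2 * Real.exp (-x^2/2)) := gauss_int 2
  have hi : Integrable (fun x : ℝ => (x^2 - 1) * Real.exp (-x^2/2)) := by
    refine (hi2.sub gauss_int0).congr ?_
    filter_upwards with x
    simp only [Pi.sub_apply]
    ring
  have ht : Tendsto (fun x : ℝ => -(x * Real.exp (-x^2/2))) atTop (nhds 0) := by
    have h := (gauss_tendsto 1).neg
    simp only [neg_zero, pow_one] at h
    exact h
  have key := integral_Ioi_of_hasDerivAt_of_tendsto' hderiv hi.integrableOn ht
  have hsplit : ∫ u in Set.Ioi c, ((u^2 - 1) * Real.exp (-u^2/2))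
      = (∫ u in Set.Ioi c, u^2 * Real.exp (-u^2/2)) - ∫ u in Set.Ioi c, Real.exp (-u^2/2) := by
    rw [← integral_sub hi2.integrableOn gauss_int0.integrableOn]
    congr 1
    funext u
    ring
  rw [hsplit] at key
  have : -(c * Real.exp (-c^2/2)) = -(c * Real.exp (-c^2/2)) := rfl
  unfold Gt
  have h0 : (0:ℝ) - -(c * Real.exp (-c^2/2)) = c * Real.exp (-c^2/2) := by ring
  rw [h0] at key
  linarith

lemma shift_int (c : ℝ) (ψ : ℝ → ℝ) :
    ∫ x in Set.Ioi (0:ℝ), ψ (x + c) = ∫ u in Set.Ioi c, ψ u := by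
  rw [← integral_indicator measurableSet_Ioi, ← integral_indicator measurableSet_Ioi,
    ← integral_add_right_eq_self (Set.indicator (Set.Ioi c) ψ) c]
  congr 1
  funext x
  simp [Set.indicator_apply, Set.mem_Ioi, lt_add_iff_pos_left]

lemma tailB (c : ℝ) :
    ∫ u in Set.Ioi c, (u - c) * Real.exp (-u^2/2)
      = Real.exp (-c^2/2) - c * Gt c := by
  have hi1 : Integrable (fun u : ℝ => u * Real.exp (-u^2/2)) := by simpa using gauss_int 1
  have hsplit : ∫ u in Set.Ioi c, (u - c) * Real.exp (-u^2/2)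
      = (∫ u in Set.Ioi c, u * Real.exp (-u^2/2))
        - ∫ u in Set.Ioi c, c * Real.exp (-u^2/2) := by
    rw [← integral_sub hi1.integrableOn (gauss_int0.const_mul c).integrableOn]
    congr 1
    funext u
    ring
  rw [hsplit, tail1, integral_const_mul]
  rfl

lemma tailH (c : ℝ) :
    ∫ u in Set.Ioi c, (u - c)^2 * Real.exp (-u^2/2)
      = (c^2 + 1) * Gt c - c * Real.exp (-c^2/2) := by
  have hi1 : Integrable (fun u : ℝ => u * Real.exp (-u^2/2)) := by simpa using gauss_int 1
  have hia : Integrable (fun u : ℝ => u^2 * Real.exp (-u^2/2) - 2*c * (u * Real.exp (-u^2/2))) :=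
    (gauss_int 2).sub (hi1.const_mul (2*c))
  have hsplit : ∫ u in Set.Ioi c, (u - c)^2 * Real.exp (-u^2/2)
      = ((∫ u in Set.Ioi c, u^2 * Real.exp (-u^2/2))
        - ∫ u in Set.Ioi c, 2*c * (u * Real.exp (-u^2/2)))
        + ∫ u in Set.Ioi c, c^2 * Real.exp (-u^2/2) := by
    rw [← integral_sub (gauss_int 2).integrableOn (hi1.const_mul (2*c)).integrableOn,
      ← integral_add hia.integrableOn (gauss_int0.const_mul (c^2)).integrableOn]
    congr 1
    funext u
    ring
  rw [hsplit, tail2, integral_const_mul, tail1, integral_const_mul]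
  show _ = (c^2+1) * Gt c - c * Real.exp (-c^2/2)
  unfold Gt
  ring

lemma pos_int (c : ℝ) (f : ℝ → ℝ) (hint : IntegrableOn f (Set.Ioi c))
    (hpos : ∀ u ∈ Set.Ioi c, 0 < f u) : 0 < ∫ u in Set.Ioi c, f u := by
  rw [setIntegral_pos_iff_support_of_nonneg_ae ?_ hint]
  · refine lt_of_lt_of_le ?_ (measure_mono (fun u hu => ⟨(hpos u hu).ne', hu⟩))
    simp [Real.volume_Ioi]
  · filter_upwards [ae_restrict_mem measurableSet_Ioi] with u hu
    exact (hpos u hu).le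

lemma I0eq (c : ℝ) : (∫ x in Set.Ioi (0:ℝ), x * Real.exp (-x^2/2 - c*x))
    = Real.exp (c^2/2) * (Real.exp (-c^2/2) - c * Gt c) := by
  have hcong : ∀ x : ℝ, x * Real.exp (-x^2/2 - c*x)
      = Real.exp (c^2/2) * ((x + c - c) * Real.exp (-(x+c)^2/2)) := by
    intro x
    rw [show (-x^2/2 - c*x) = (c^2/2 + (-(x+c)^2/2)) from by ring, Real.exp_add]
    ring
  simp_rw [hcong]
  rw [integral_const_mul, shift_int c (fun u => (u - c) * Real.exp (-u^2/2)), tailB]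

lemma I1eq (c : ℝ) : (∫ x in Set.Ioi (0:ℝ), x * (x + c)^2 * Real.exp (-x^2/2 - c*x))
    = Real.exp (c^2/2) * (2 * Real.exp (-c^2/2) - c * Gt c) := by
  have hcong : ∀ x : ℝ, x * (x + c)^2 * Real.exp (-x^2/2 - c*x)
      = Real.exp (c^2/2) * ((x + c - c) * (x+c)^2 * Real.exp (-(x+c)^2/2)) := by
    intro x
    rw [show (-x^2/2 - c*x) = (c^2/2 + (-(x+c)^2/2)) from by ring, Real.exp_add]
    ring
  simp_rw [hcong]
  rw [integral_const_mul, shift_int c (fun u => (u - c) * u^2 * Real.exp (-u^2/2))]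
  have hsplit : ∫ u in Set.Ioi c, (u - c) * u^2 * Real.exp (-u^2/2)
      = (∫ u in Set.Ioi c, u^3 * Real.exp (-u^2/2))
        - ∫ u in Set.Ioi c, c * (u^2 * Real.exp (-u^2/2)) := by
    rw [← integral_sub (gauss_int 3).integrableOn ((gauss_int 2).const_mul c).integrableOn]
    congr 1
    funext u
    ring
  rw [hsplit, tail3, integral_const_mul, tail2]
  ring

lemma Gt_eq (c : ℝ) : Gt c = Gt 0 - ∫ u in (0:ℝ)..c, Real.exp (-u^2/2) := by
  unfold Gt
  rcases le_or_gt 0 c with h | h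
  · rw [intervalIntegral.integral_of_le h]
    have hu : Set.Ioc (0:ℝ) c ∪ Set.Ioi c = Set.Ioi 0 := Set.Ioc_union_Ioi_eq_Ioi h
    have hs := setIntegral_union (Set.Ioc_disjoint_Ioi le_rfl) measurableSet_Ioi
      (gauss_int0.integrableOn (s := Set.Ioc (0:ℝ) c))
      (gauss_int0.integrableOn (s := Set.Ioi c))
    rw [hu] at hs
    linarith
  · rw [intervalIntegral.integral_of_ge h.le]
    have hu : Set.Ioc c (0:ℝ) ∪ Set.Ioi 0 = Set.Ioi c := Set.Ioc_union_Ioi_eq_Ioi h.le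
    have hs := setIntegral_union (Set.Ioc_disjoint_Ioi le_rfl) measurableSet_Ioi
      (gauss_int0.integrableOn (s := Set.Ioc c (0:ℝ)))
      (gauss_int0.integrableOn (s := Set.Ioi 0))
    rw [hu] at hs
    linarith

lemma Gt_hasDeriv (c : ℝ) : HasDerivAt Gt (-Real.exp (-c^2/2)) c := by
  have hcont : Continuous fun u : ℝ => Real.exp (-u^2/2) :=
    ((continuous_pow 2).neg.div_const 2).rexp
  have hI : HasDerivAt (fun c : ℝ => ∫ u in (0:ℝ)..c, Real.exp (-u^2/2))
      (Real.exp (-c^2/2)) c := by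
    refine intervalIntegral.integral_hasDerivAt_right
      (hcont.intervalIntegrable _ _)
      (hcont.stronglyMeasurableAtFilter _ _)
      hcont.continuousAt
  have h2 := hI.const_sub (Gt 0)
  exact h2.congr_of_eventuallyEq (Filter.Eventually.of_forall Gt_eq)

theorem stmt8 (f₁ : ℝ → ℝ)
    (hf₁ : ∀ c : ℝ, f₁ c =
      (∫ x in Set.Ioi (0:ℝ), x * (x + c)^2 * Real.exp (-x^2/2 - c*x)) /
      (∫ x in Set.Ioi (0:ℝ), x * Real.exp (-x^2/2 - c*x))) :
    ∀ c : ℝ, 0 ≤ c → 0 < deriv f₁ c := by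
  have hf : f₁ = fun c => (2 * Real.exp (-c^2/2) - c * Gt c)
      / (Real.exp (-c^2/2) - c * Gt c) := by
    funext d
    rw [hf₁ d, I1eq d, I0eq d, mul_div_mul_left _ _ (Real.exp_ne_zero _)]
  have hD_pos : ∀ d : ℝ, 0 < Real.exp (-d^2/2) - d * Gt d := by
    intro d
    rw [← tailB d]
    have hi1 : Integrable (fun u : ℝ => u * Real.exp (-u^2/2)) := by simpa using gauss_int 1
    have hint : Integrable (fun u : ℝ => (u - d) * Real.exp (-u^2/2)) := by
      refine (hi1.sub (gauss_int0.const_mul d)).congr ?_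
      filter_upwards with u
      simp only [Pi.sub_apply]
      ring
    refine pos_int d _ hint.integrableOn ?_
    intro u hu
    have : 0 < u - d := sub_pos.mpr hu
    positivity
  have hH_pos : ∀ d : ℝ, 0 < (d^2 + 1) * Gt d - d * Real.exp (-d^2/2) := by
    intro d
    rw [← tailH d]
    have hi1 : Integrable (fun u : ℝ => u * Real.exp (-u^2/2)) := by simpa using gauss_int 1
    have hint : Integrable (fun u : ℝ => (u - d)^2 * Real.exp (-u^2/2)) := by
      refine (((gauss_int 2).sub (hi1.const_mul (2*d))).add
        (gauss_int0.const_mul (d^2))).congr ?_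
      filter_upwards with u
      simp only [Pi.sub_apply, Pi.add_apply]
      ring
    refine pos_int d _ hint.integrableOn ?_
    intro u hu
    have : 0 < u - d := sub_pos.mpr hu
    positivity
  intro c _
  have hG := Gt_hasDeriv c
  have hE := E_hasDeriv c
  have hN : HasDerivAt (fun d : ℝ => 2 * Real.exp (-d^2/2) - d * Gt d)
      (2 * (-c * Real.exp (-c^2/2)) - (1 * Gt c + c * -Real.exp (-c^2/2))) c :=
    (hE.const_mul 2).sub ((hasDerivAt_id c).mul hG)
  have hD : HasDerivAt (fun d : ℝ => Real.exp (-d^2/2) - d * Gt d)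
      (-c * Real.exp (-c^2/2) - (1 * Gt c + c * -Real.exp (-c^2/2))) c :=
    hE.sub ((hasDerivAt_id c).mul hG)
  have hne : Real.exp (-c^2/2) - c * Gt c ≠ 0 := (hD_pos c).ne'
  have hdiv := hN.div hD hne
  rw [hf, show (fun c : ℝ => (2 * Real.exp (-c^2/2) - c * Gt c) / (Real.exp (-c^2/2) - c * Gt c)) = ((fun d : ℝ => 2 * Real.exp (-d^2/2) - d * Gt d) / fun d => Real.exp (-d^2/2) - d * Gt d) from rfl, hdiv.deriv]
  have hnum : (2 * (-c * Real.exp (-c^2/2)) - (1 * Gt c + c * -Real.exp (-c^2/2)))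
        * (Real.exp (-c^2/2) - c * Gt c)
      - (2 * Real.exp (-c^2/2) - c * Gt c)
        * (-c * Real.exp (-c^2/2) - (1 * Gt c + c * -Real.exp (-c^2/2)))
      = Real.exp (-c^2/2) * ((c^2 + 1) * Gt c - c * Real.exp (-c^2/2)) := by
    ring
  rw [hnum]
  exact div_pos (mul_pos (Real.exp_pos _) (hH_pos c)) (pow_pos (hD_pos c) 2)
end

section
/- Define f₂(c) = ∫_0^∞ x(x+c) e^{-x²/2 − cx} dx / ∫_0^∞ x e^{-x²/2 − cx} dx for c ≥ 0. Then f₂'(c) > 0 for all c ≥ 0. -/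
open MeasureTheory Real Set Filter



lemma key_int (b : ℝ) : Integrable (fun x : ℝ => exp (-x^2/4 - b*x)) := by
  have h : Integrable (fun y : ℝ => exp (-(1/4:ℝ) * y^2)) :=
    integrable_exp_neg_mul_sq (by norm_num)
  have h2 := (h.comp_add_right (2*b)).const_mul (exp (b^2))
  have : (fun x : ℝ => exp (b^2) * exp (-(1/4:ℝ) * (x + 2*b)^2))
      = fun x : ℝ => exp (-x^2/4 - b*x) := by
    funext x; rw [← Real.exp_add]; ring_nf
  rwa [this] at h2

lemma abs_pow_le (k : ℕ) (hk : k ≤ 2) (x : ℝ) : |x|^k * exp (-x^2/4) ≤ 5 := by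
  have h1 : x^2/4 + 1 ≤ exp (x^2/4) := Real.add_one_le_exp _
  have h2 : (0:ℝ) < exp (-x^2/4) := exp_pos _
  have h3 : exp (-x^2/4) * exp (x^2/4) = 1 := by rw [← Real.exp_add]; ring_nf; exact Real.exp_zero
  interval_cases k
  · nlinarith
  · have h4 : |x| ^ 1 = |x| := pow_one _
    have h5 : |x|^2 = x^2 := sq_abs x
    nlinarith [abs_nonneg x, sq_nonneg (|x| - 1)]
  · have h5 : |x|^2 = x^2 := sq_abs x
    nlinarith

lemma int_poly (c : ℝ) (k : ℕ) (hk : k ≤ 2) :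
    Integrable (fun x : ℝ => x^k * exp (-x^2/2 - c*x)) := by
  apply Integrable.mono' (((key_int c).const_mul 5))
    ((continuous_pow k).mul (by continuity : Continuous fun x : ℝ => exp (-x^2/2 - c*x))).aestronglyMeasurable
  refine ae_of_all _ (fun x => ?_)
  have h1 : ‖x^k * exp (-x^2/2 - c*x)‖ = |x|^k * exp (-x^2/2 - c*x) := by
    rw [norm_mul, norm_pow, Real.norm_eq_abs, Real.norm_eq_abs, abs_of_pos (exp_pos _)]
  show ‖x^k * exp (-x^2/2 - c*x)‖ ≤ 5 * exp (-x^2/4 - c*x)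
  rw [h1]
  have h2 : exp (-x^2/2 - c*x) = exp (-x^2/4) * exp (-x^2/4 - c*x) := by
    rw [← Real.exp_add]; ring_nf
  rw [h2, ← mul_assoc]
  have := abs_pow_le k hk x
  have h3 : (0:ℝ) < exp (-x^2/4 - c*x) := exp_pos _
  nlinarith [pow_nonneg (abs_nonneg x) k, (exp_pos (-x^2/4)).le]



noncomputable def NN (c : ℝ) : ℝ := ∫ x in Ioi (0:ℝ), exp (-x^2/2 - c*x)

lemma int0 (c : ℝ) : Integrable (fun x : ℝ => exp (-x^2/2 - c*x)) := by
  have := int_poly c 0 (by norm_num)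
  have h : (fun x : ℝ => x^0 * exp (-x^2/2 - c*x)) = fun x : ℝ => exp (-x^2/2 - c*x) := by
    funext x; ring
  rwa [h] at this

lemma int1 (c : ℝ) : Integrable (fun x : ℝ => x * exp (-x^2/2 - c*x)) := by
  have := int_poly c 1 (by norm_num)
  have h : (fun x : ℝ => x^1 * exp (-x^2/2 - c*x)) = fun x : ℝ => x * exp (-x^2/2 - c*x) := by
    funext x; ring
  rwa [h] at this

lemma tendsto_exp_quad (c : ℝ) :
    Tendsto (fun x : ℝ => exp (-x^2/4 - c*x)) atTop (nhds 0) := by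
  apply Real.tendsto_exp_atBot.comp
  have h1 : Tendsto (fun x : ℝ => x * (x/4 + c)) atTop atTop :=
    tendsto_id.atTop_mul_atTop₀ (tendsto_atTop_add_const_right _ c
      (tendsto_id.atTop_div_const (by norm_num)))
  have h2 : Tendsto (fun x : ℝ => -(x * (x/4 + c))) atTop atBot :=
    tendsto_neg_atBot_iff.mpr h1
  exact h2.congr (fun x => by ring)

lemma tendsto_exp_quad2 (c : ℝ) :
    Tendsto (fun x : ℝ => exp (-x^2/2 - c*x)) atTop (nhds 0) := by
  have h := tendsto_exp_quad c
  refine squeeze_zero_norm (fun x => ?_) h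
  rw [Real.norm_eq_abs, abs_of_pos (exp_pos _)]
  apply Real.exp_le_exp.2
  nlinarith [sq_nonneg x]

lemma tendsto_x_exp_quad (c : ℝ) :
    Tendsto (fun x : ℝ => x * exp (-x^2/2 - c*x)) atTop (nhds 0) := by
  have h := (tendsto_exp_quad c).const_mul (5:ℝ)
  rw [mul_zero] at h
  refine squeeze_zero_norm (fun x => ?_) h
  rw [Real.norm_eq_abs, abs_mul, abs_of_pos (exp_pos _)]
  have h2 : exp (-x^2/2 - c*x) = exp (-x^2/4) * exp (-x^2/4 - c*x) := by
    rw [← Real.exp_add]; ring_nf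
  rw [h2, ← mul_assoc]
  have h3 := abs_pow_le 1 (by norm_num) x
  rw [pow_one] at h3
  nlinarith [(exp_pos (-x^2/4 - c*x)).le, abs_nonneg x, (exp_pos (-x^2/4)).le]

lemma hasDerivAt_inner (c x : ℝ) :
    HasDerivAt (fun x : ℝ => -x^2/2 - c*x) (-x - c) x := by
  have h1 := (((hasDerivAt_pow 2 x).neg.div_const 2).sub ((hasDerivAt_id x).const_mul c))
  refine h1.congr_deriv ?_
  try simp only [id_eq]
  push_cast; ring

lemma eval_den (c : ℝ) :
    ∫ x in Ioi (0:ℝ), (x + c) * exp (-x^2/2 - c*x) = 1 := by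
  have hderiv : ∀ x ∈ Ici (0:ℝ), HasDerivAt (fun x : ℝ => -exp (-x^2/2 - c*x))
      ((x + c) * exp (-x^2/2 - c*x)) x := by
    intro x _
    have := ((hasDerivAt_inner c x).exp).neg
    refine this.congr_deriv ?_
    try simp only [id_eq]
    ring
  have hint : IntegrableOn (fun x : ℝ => (x + c) * exp (-x^2/2 - c*x)) (Ioi 0) := by
    have h := (int1 c).add ((int0 c).const_mul c)
    have he : (fun x : ℝ => x * exp (-x^2/2 - c*x) + c * exp (-x^2/2 - c*x))
        = fun x : ℝ => (x + c) * exp (-x^2/2 - c*x) := by funext x; ring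
    exact (h.congr (Filter.Eventually.of_forall (fun x => by simp; ring))).integrableOn
  have htend : Tendsto (fun x : ℝ => -exp (-x^2/2 - c*x)) atTop (nhds 0) := by
    have := (tendsto_exp_quad2 c).neg; rwa [neg_zero] at this
  have := integral_Ioi_of_hasDerivAt_of_tendsto' hderiv hint htend
  rw [this]; norm_num

lemma eval_D (c : ℝ) :
    ∫ x in Ioi (0:ℝ), x * exp (-x^2/2 - c*x) = 1 - c * NN c := by
  have h := eval_den c
  have hsplit : ∫ x in Ioi (0:ℝ), (x + c) * exp (-x^2/2 - c*x)
      = (∫ x in Ioi (0:ℝ), x * exp (-x^2/2 - c*x)) + c * NN c := by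
    rw [NN, ← integral_const_mul, ← integral_add ((int1 c).integrableOn)
      (((int0 c).const_mul c).integrableOn)]
    congr 1; funext x; ring
  rw [hsplit] at h; linarith

lemma eval_num (c : ℝ) :
    ∫ x in Ioi (0:ℝ), x * (x + c) * exp (-x^2/2 - c*x) = NN c := by
  have hderiv : ∀ x ∈ Ici (0:ℝ), HasDerivAt (fun x : ℝ => x * exp (-x^2/2 - c*x))
      ((1 - x * (x + c)) * exp (-x^2/2 - c*x)) x := by
    intro x _
    have := (hasDerivAt_id x).mul ((hasDerivAt_inner c x).exp)
    refine this.congr_deriv ?_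
    try simp only [id_eq]
    ring
  have hint2 : Integrable (fun x : ℝ => x * (x + c) * exp (-x^2/2 - c*x)) := by
    have h := (int_poly c 2 (by norm_num)).add ((int1 c).const_mul c)
    have he : (fun x : ℝ => x^2 * exp (-x^2/2 - c*x) + c * (x * exp (-x^2/2 - c*x)))
        = fun x : ℝ => x * (x + c) * exp (-x^2/2 - c*x) := by funext x; ring
    exact h.congr (Filter.Eventually.of_forall (fun x => by simp; ring))
  have hint : IntegrableOn (fun x : ℝ => (1 - x * (x + c)) * exp (-x^2/2 - c*x)) (Ioi 0) := by
    have h := (int0 c).sub hint2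
    have he : (fun x : ℝ => exp (-x^2/2 - c*x) - x * (x + c) * exp (-x^2/2 - c*x))
        = fun x : ℝ => (1 - x * (x + c)) * exp (-x^2/2 - c*x) := by funext x; ring
    exact (h.congr (Filter.Eventually.of_forall (fun x => by simp; ring))).integrableOn
  have htend := tendsto_x_exp_quad c
  have h := integral_Ioi_of_hasDerivAt_of_tendsto' hderiv hint htend
  norm_num at h
  have hsplit : ∫ x in Ioi (0:ℝ), (1 - x * (x + c)) * exp (-x^2/2 - c*x)
      = NN c - ∫ x in Ioi (0:ℝ), x * (x + c) * exp (-x^2/2 - c*x) := by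
    rw [NN, ← integral_sub ((int0 c).integrableOn) hint2.integrableOn]
    congr 1; funext x; ring
  rw [hsplit] at h; linarith





lemma NN_hasDeriv (c : ℝ) : HasDerivAt NN (c * NN c - 1) c := by
  have main := hasDerivAt_integral_of_dominated_loc_of_deriv_le (μ := volume.restrict (Ioi 0))
    (x₀ := c) (F := fun b x => exp (-x^2/2 - b*x)) (F' := fun b x => -x * exp (-x^2/2 - b*x))
    (bound := fun x => 5 * exp (-x^2/4 - (c-1)*x)) (s := Metric.ball c 1) (Metric.ball_mem_nhds c one_pos)
    ?_ ?_ ?_ ?_ ?_ ?_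
  · have h := main.2
    have hval : (∫ x in Ioi (0:ℝ), -x * exp (-x^2/2 - c*x)) = c * NN c - 1 := by
      have h2 : (∫ x in Ioi (0:ℝ), -x * exp (-x^2/2 - c*x))
          = -∫ x in Ioi (0:ℝ), x * exp (-x^2/2 - c*x) := by
        rw [← integral_neg]; congr 1; funext x; ring
      rw [h2, eval_D c]; ring
    rw [hval] at h
    exact h
  · exact Eventually.of_forall (fun b =>
      ((by continuity : Continuous fun x : ℝ => exp (-x^2/2 - b*x))).aestronglyMeasurable)
  · exact (int0 c).integrableOn
  · exact ((by continuity : Continuous fun x : ℝ => -x * exp (-x^2/2 - c*x))).aestronglyMeasurable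
  · filter_upwards [ae_restrict_mem measurableSet_Ioi] with x hx
    intro b hb
    have hx0 : (0:ℝ) < x := hx
    rw [Real.norm_eq_abs, abs_mul, abs_neg, abs_of_pos (exp_pos _)]
    have hb1 : c - 1 ≤ b := by
      have := abs_lt.1 (mem_ball_iff_norm.1 hb); linarith [this.2]
    have e1 : exp (-x^2/2 - b*x) ≤ exp (-x^2/2 - (c-1)*x) := by
      apply Real.exp_le_exp.2; nlinarith
    have e2 : exp (-x^2/2 - (c-1)*x) = exp (-x^2/4) * exp (-x^2/4 - (c-1)*x) := by
      rw [← Real.exp_add]; ring_nf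
    have h3 := abs_pow_le 1 (by norm_num) x
    rw [pow_one] at h3
    calc |x| * exp (-x^2/2 - b*x) ≤ |x| * exp (-x^2/2 - (c-1)*x) := by
          apply mul_le_mul_of_nonneg_left e1 (abs_nonneg x)
      _ = |x| * exp (-x^2/4) * exp (-x^2/4 - (c-1)*x) := by rw [e2]; ring
      _ ≤ 5 * exp (-x^2/4 - (c-1)*x) := by
          apply mul_le_mul_of_nonneg_right h3 (exp_pos _).le
  · exact ((key_int (c-1)).const_mul 5).integrableOn
  · refine ae_of_all _ (fun x => fun b _ => ?_)
    have h := ((((hasDerivAt_id b).const_mul x).neg.const_add (-x^2/2)).exp)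
    have hf : (fun y : ℝ => exp (-x^2/2 + -(x * id y))) = (fun y : ℝ => exp (-x^2/2 - y*x)) := by
      funext y; simp only [id_eq]; ring_nf
    have hd : exp (-x^2/2 + -(x * id b)) * -(x*1) = -x * exp (-x^2/2 - b*x) := by
      simp only [id_eq, mul_one]; ring_nf
    simp only [Pi.neg_apply] at h
    rw [hf, hd] at h
    exact h





lemma D_pos (c : ℝ) : 0 < 1 - c * NN c := by
  rw [← eval_D c]
  rw [setIntegral_pos_iff_support_of_nonneg_ae]
  · have hsub : Ioi (0:ℝ) ⊆ Function.support (fun x : ℝ => x * exp (-x^2/2 - c*x)) ∩ Ioi 0 := by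
      intro x hx
      refine ⟨?_, hx⟩
      simp only [Function.mem_support]
      have : (0:ℝ) < x := hx
      positivity
    calc (0:ENNReal) < volume (Ioi (0:ℝ)) := by simp
      _ ≤ _ := measure_mono hsub
  · filter_upwards [ae_restrict_mem measurableSet_Ioi] with x hx
    have : (0:ℝ) < x := hx
    positivity
  · exact (int1 c).integrableOn

lemma NN_nonneg (c : ℝ) : 0 ≤ NN c :=
  setIntegral_nonneg measurableSet_Ioi (fun x _ => (exp_pos _).le)

lemma NN_le (c : ℝ) (hc : 0 ≤ c) : NN c ≤ NN 0 := by
  refine setIntegral_mono_on (int0 c).integrableOn (int0 0).integrableOn measurableSet_Ioi ?_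
  intro x hx
  have hx0 : (0:ℝ) < x := hx
  apply Real.exp_le_exp.2
  nlinarith

noncomputable def φ (c : ℝ) : ℝ := (Real.sqrt (c^2 + 4) - c) / 2

lemma sqrt_sq (c : ℝ) : Real.sqrt (c^2+4) ^ 2 = c^2 + 4 :=
  Real.sq_sqrt (by positivity)

lemma sqrt_pos' (c : ℝ) : 0 < Real.sqrt (c^2+4) :=
  Real.sqrt_pos.2 (by positivity)

lemma sqrt_gt (c : ℝ) : c < Real.sqrt (c^2+4) := by
  nlinarith [sqrt_sq c, sqrt_pos' c]

lemma φ_pos (c : ℝ) : 0 < φ c := by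
  have := sqrt_gt c; rw [φ]; linarith

lemma φ_mul (c : ℝ) : φ c * (φ c + c) = 1 := by
  have := sqrt_sq c; rw [φ]; nlinarith

lemma φ_le_one (c : ℝ) (hc : 0 ≤ c) : φ c ≤ 1 := by
  have h := sqrt_sq c
  have h2 : Real.sqrt (c^2+4) ≤ c + 2 := by nlinarith [sqrt_pos' c]
  rw [φ]; linarith

noncomputable def ψ (c : ℝ) : ℝ := exp (-c^2/2) * (NN c - φ c)

lemma sqrt_hasDeriv (c : ℝ) :
    HasDerivAt (fun c : ℝ => Real.sqrt (c^2+4)) (c / Real.sqrt (c^2+4)) c := by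
  have hinner : HasDerivAt (fun c : ℝ => c^2 + 4) (2*c) c := by
    have := (hasDerivAt_pow 2 c).add_const 4
    refine this.congr_deriv ?_; push_cast; ring
  have h := hinner.sqrt (by positivity)
  convert h using 1
  rw [eq_div_iff (by positivity : (2:ℝ) * Real.sqrt (c^2+4) ≠ 0)]
  field_simp

noncomputable def ψd (c : ℝ) : ℝ :=
  exp (-c^2/2) * -c * (NN c - φ c) +
    exp (-c^2/2) * ((c * NN c - 1) - (c / Real.sqrt (c^2+4) - 1) / 2)

lemma φ_hasDeriv (c : ℝ) : HasDerivAt φ ((c / Real.sqrt (c^2+4) - 1) / 2) c := by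
  unfold φ
  exact ((sqrt_hasDeriv c).sub (hasDerivAt_id c)).div_const 2

lemma exp_hasDeriv (c : ℝ) : HasDerivAt (fun c : ℝ => exp (-c^2/2)) (exp (-c^2/2) * -c) c := by
  have h1 : HasDerivAt (fun c : ℝ => -c^2/2) (-c) c := by
    have := (hasDerivAt_pow 2 c).neg.div_const 2
    refine this.congr_deriv ?_; push_cast; ring
  exact h1.exp

lemma ψ_hasDeriv (c : ℝ) : HasDerivAt ψ (ψd c) c := by
  unfold ψ ψd
  exact (exp_hasDeriv c).mul ((NN_hasDeriv c).sub (φ_hasDeriv c))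

lemma key_ineq (c : ℝ) (hc : 0 ≤ c) : c^3 + 3*c < (c^2+1) * Real.sqrt (c^2+4) := by
  set s := Real.sqrt (c^2+4) with hs
  have hs2 : s^2 = c^2+4 := sqrt_sq c
  have hspos : 0 < s := sqrt_pos' c
  have he : ((c^2+1)*s)^2 = (c^3+3*c)^2 + 4 := by rw [mul_pow, hs2]; ring
  have hsq : (c^3+3*c)^2 < ((c^2+1)*s)^2 := by rw [he]; linarith
  exact lt_of_pow_lt_pow_left₀ 2 (by positivity) hsq

lemma ψd_neg (c : ℝ) (hc : 0 ≤ c) : ψd c < 0 := by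
  set s := Real.sqrt (c^2+4) with hs
  have hs2 : s^2 = c^2+4 := sqrt_sq c
  have hspos : 0 < s := sqrt_pos' c
  have key := key_ineq c hc
  have hV : ψd c = exp (-c^2/2) * ((c*s*(s-c) - s - c) / (2*s)) := by
    rw [ψd, φ]
    field_simp
    ring
  rw [hV]
  apply mul_neg_of_pos_of_neg (exp_pos _)
  apply div_neg_of_neg_of_pos _ (by positivity)
  have h9 : c * s^2 = c^3 + 4*c := by rw [hs2]; ring
  nlinarith [key, h9]

lemma ψ_anti : StrictAntiOn ψ (Ici 0) := by
  apply strictAntiOn_of_deriv_neg (convex_Ici 0)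
  · exact fun x _ => (ψ_hasDeriv x).differentiableAt.continuousAt.continuousWithinAt
  · intro x hx
    rw [interior_Ici] at hx
    rw [(ψ_hasDeriv x).deriv]
    exact ψd_neg x (le_of_lt hx)


lemma ψ_tendsto : Tendsto ψ atTop (nhds 0) := by
  have hg : Tendsto (fun c : ℝ => (NN 0 + 1) * exp (-c^2/2)) atTop (nhds 0) := by
    have h0 : Tendsto (fun x : ℝ => exp (-x^2/2)) atTop (nhds 0) :=
      (tendsto_exp_quad2 0).congr (fun x => by norm_num)
    have h := h0.const_mul (NN 0 + 1)
    rwa [mul_zero] at h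
  refine squeeze_zero_norm' ?_ hg
  filter_upwards [eventually_ge_atTop (0:ℝ)] with c hc
  rw [ψ, Real.norm_eq_abs, abs_mul, abs_of_pos (exp_pos _)]
  have h1 : |NN c - φ c| ≤ NN 0 + 1 := by
    have := NN_le c hc; have := NN_nonneg c; have := φ_pos c; have := φ_le_one c hc
    have := NN_nonneg 0
    rw [abs_le]; constructor <;> linarith
  have h2 : (0:ℝ) < exp (-c^2/2) := exp_pos _
  calc exp (-c^2/2) * |NN c - φ c| ≤ exp (-c^2/2) * (NN 0 + 1) :=
        mul_le_mul_of_nonneg_left h1 h2.le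
    _ = (NN 0 + 1) * exp (-c^2/2) := by ring

lemma ψ_pos (c : ℝ) (hc : 0 ≤ c) : 0 < ψ c := by
  have h1 : ψ (c+1) < ψ c := ψ_anti hc
    (mem_Ici.2 (by linarith) : c + 1 ∈ Ici (0:ℝ)) (lt_add_one c)
  have h2 : 0 ≤ ψ (c+1) := by
    refine le_of_tendsto ψ_tendsto ?_
    rw [eventually_atTop]
    refine ⟨c+2, fun t ht => ?_⟩
    exact (ψ_anti (mem_Ici.2 (by linarith) : c + 1 ∈ Ici (0:ℝ))
      (mem_Ici.2 (by linarith) : t ∈ Ici (0:ℝ)) (by linarith)).le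
  linarith

lemma mills (c : ℝ) (hc : 0 ≤ c) : 1 < NN c * (NN c + c) := by
  have hψ := ψ_pos c hc
  have hNφ : φ c < NN c := by
    rw [ψ] at hψ
    nlinarith [exp_pos (-c^2/2)]
  have h1 := φ_mul c
  have h2 := φ_pos c
  nlinarith [NN_nonneg c]




theorem stmt9 (f₂ : ℝ → ℝ)
    (hf₂ : ∀ c : ℝ, f₂ c =
      (∫ x in Set.Ioi (0:ℝ), x * (x + c) * Real.exp (-x^2/2 - c*x)) /
      (∫ x in Set.Ioi (0:ℝ), x * Real.exp (-x^2/2 - c*x))) :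
    ∀ c : ℝ, 0 ≤ c → 0 < deriv f₂ c := by
  intro c hc
  have hfe : f₂ = fun b => NN b / (1 - b * NN b) := by
    funext b
    rw [hf₂ b, eval_num b, eval_D b]
  have hden : HasDerivAt (fun b : ℝ => 1 - b * NN b) (-(1 * NN c + c * (c * NN c - 1))) c := by
    have h := ((hasDerivAt_id c).mul (NN_hasDeriv c)).const_sub 1
    simpa [id_eq] using h
  have hq := (NN_hasDeriv c).div hden (ne_of_gt (D_pos c))
  rw [hfe]
  show 0 < deriv (NN / fun b => 1 - b * NN b) c
  rw [hq.deriv]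
  apply div_pos
  · nlinarith [mills c hc, D_pos c]
  · exact pow_pos (D_pos c) 2
end

section
/- Fix 0 < m < 1 and for c ≥ 0 let g_{m,c}(y) = y²/2 for y ≤ c and g_{m,c}(y) = m y²/2 + (1−m)cy + (m−1)c²/2 for y > c. Define a(c) = ∫_0^∞ e^{-g_{m,c}(y)} dy and b₁(c) = ∫_0^∞ y e^{-g_{m,c}(y)} dy. Then f₃(c) = b₁(c)/a(c) is strictly decreasing in c. -/
open MeasureTheory Real Set

noncomputable def st10G (m c y : ℝ) : ℝ :=
  if y ≤ c then y^2/2 else m*y^2/2 + (1-m)*c*y + (m-1)*c^2/2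

noncomputable def st10K (c₁ c₂ t : ℝ) : ℝ :=
  if t ≤ c₁ then 0 else if t ≤ c₂ then (t-c₁)^2/2 else (c₂-c₁)*t - (c₂^2-c₁^2)/2

lemma st10_measG (m c : ℝ) : Measurable (st10G m c) := by
  unfold st10G
  exact Measurable.ite (measurableSet_le measurable_id measurable_const)
    (by fun_prop) (by fun_prop)

lemma st10_lb {m : ℝ} (hm1 : m < 1) {c : ℝ} (hc : 0 ≤ c) {y : ℝ} (hy : 0 ≤ y) :
    m/2 * y^2 ≤ st10G m c y := by
  unfold st10G
  split_ifs with h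
  · nlinarith [sq_nonneg y]
  · push_neg at h
    nlinarith [mul_le_mul_of_nonneg_left h.le hc, sq_nonneg c]

lemma st10_h_eq {m : ℝ} {c₁ c₂ : ℝ} (h12 : c₁ ≤ c₂) (t : ℝ) :
    st10G m c₂ t - st10G m c₁ t = (1-m) * st10K c₁ c₂ t := by
  unfold st10G st10K
  split_ifs <;> first | linarith | ring

lemma st10K_mono {c₁ c₂ x y : ℝ} (hc₁ : 0 ≤ c₁) (h12 : c₁ < c₂)
    (hx : 0 ≤ x) (hxy : x ≤ y) : st10K c₁ c₂ x ≤ st10K c₁ c₂ y := by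
  unfold st10K
  split_ifs <;> nlinarith [sq_nonneg (x - c₁), sq_nonneg (y - c₁), sq_nonneg (c₂ - c₁),
      sq_nonneg (c₂ - x), sq_nonneg (y - c₂)]

lemma st10K_strict {c₁ c₂ x y : ℝ} (hc₁ : 0 ≤ c₁) (h12 : c₁ < c₂)
    (hx : c₁ < x) (hxy : x < y) : st10K c₁ c₂ x < st10K c₁ c₂ y := by
  unfold st10K
  split_ifs <;> nlinarith [sq_nonneg (x - c₁), sq_nonneg (y - c₁), sq_nonneg (c₂ - c₁),
      sq_nonneg (c₂ - x), sq_nonneg (y - c₂)]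

lemma st10_key_le {m c₁ c₂ x y : ℝ} (hm1 : m < 1) (hc₁ : 0 ≤ c₁) (h12 : c₁ < c₂)
    (hx : 0 ≤ x) (hxy : x ≤ y) :
    st10G m c₂ x + st10G m c₁ y ≤ st10G m c₁ x + st10G m c₂ y := by
  have h1 := st10_h_eq (m := m) h12.le x
  have h2 := st10_h_eq (m := m) h12.le y
  have h3 := st10K_mono hc₁ h12 hx hxy
  nlinarith [mul_le_mul_of_nonneg_left h3 (by linarith : (0:ℝ) ≤ 1 - m)]

lemma st10_key_lt {m c₁ c₂ x y : ℝ} (hm1 : m < 1) (hc₁ : 0 ≤ c₁) (h12 : c₁ < c₂)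
    (hx : c₁ < x) (hxy : x < y) :
    st10G m c₂ x + st10G m c₁ y < st10G m c₁ x + st10G m c₂ y := by
  have h1 := st10_h_eq (m := m) h12.le x
  have h2 := st10_h_eq (m := m) h12.le y
  have h3 := st10K_strict hc₁ h12 hx hxy
  nlinarith [mul_lt_mul_of_pos_left h3 (by linarith : (0:ℝ) < 1 - m)]

lemma st10_int_v {m : ℝ} (hm0 : 0 < m) (hm1 : m < 1) {c : ℝ} (hc : 0 ≤ c) :
    IntegrableOn (fun y => Real.exp (-(st10G m c y))) (Ioi 0) := by
  have hb : (0:ℝ) < m/2 := by linarith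
  refine Integrable.mono ((integrable_exp_neg_mul_sq hb).integrableOn) ?_ ?_
  · exact ((st10_measG m c).neg.exp).aestronglyMeasurable
  · filter_upwards [ae_restrict_mem measurableSet_Ioi] with y hy
    rw [Real.norm_eq_abs, Real.norm_eq_abs, abs_of_pos (exp_pos _), abs_of_pos (exp_pos _)]
    exact exp_le_exp.2 (by have := st10_lb hm1 hc (le_of_lt hy); linarith)

lemma st10_int_yv {m : ℝ} (hm0 : 0 < m) (hm1 : m < 1) {c : ℝ} (hc : 0 ≤ c) :
    IntegrableOn (fun y => y * Real.exp (-(st10G m c y))) (Ioi 0) := by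
  have hb : (0:ℝ) < m/2 := by linarith
  refine Integrable.mono ((integrable_mul_exp_neg_mul_sq hb).integrableOn) ?_ ?_
  · exact (measurable_id.mul ((st10_measG m c).neg.exp)).aestronglyMeasurable
  · filter_upwards [ae_restrict_mem measurableSet_Ioi] with y hy
    rw [Real.norm_eq_abs, Real.norm_eq_abs, abs_mul, abs_mul,
      abs_of_pos (exp_pos _), abs_of_pos (exp_pos _)]
    refine mul_le_mul_of_nonneg_left ?_ (abs_nonneg _)
    exact exp_le_exp.2 (by have := st10_lb hm1 hc (le_of_lt hy); linarith)

lemma st10_a_pos {m : ℝ} (hm0 : 0 < m) (hm1 : m < 1) {c : ℝ} (hc : 0 ≤ c) :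
    0 < ∫ y in Ioi (0:ℝ), Real.exp (-(st10G m c y)) := by
  rw [integral_pos_iff_support_of_nonneg_ae
    (Filter.Eventually.of_forall fun y => (exp_pos _).le) (st10_int_v hm0 hm1 hc)]
  have : Function.support (fun y => Real.exp (-(st10G m c y))) = Set.univ := by
    ext y; simp [Real.exp_ne_zero]
  rw [this, Measure.restrict_apply_univ, Real.volume_Ioi]
  exact ENNReal.zero_lt_top

theorem stmt10 (m : ℝ) (hm0 : 0 < m) (hm1 : m < 1)
    (g : ℝ → ℝ → ℝ)
    (hg : ∀ c y : ℝ, g c y =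
      if y ≤ c then y^2/2 else m*y^2/2 + (1-m)*c*y + (m-1)*c^2/2)
    (a b₁ : ℝ → ℝ)
    (ha : ∀ c, a c = ∫ y in Set.Ioi (0:ℝ), Real.exp (-(g c y)))
    (hb : ∀ c, b₁ c = ∫ y in Set.Ioi (0:ℝ), y * Real.exp (-(g c y))) :
    StrictAntiOn (fun c => b₁ c / a c) (Set.Ici 0) := by
  have hgG : ∀ c y, g c y = st10G m c y := fun c y => by rw [hg]; rfl
  intro c₁ hc₁ c₂ hc₂ h12
  simp only
  have hc₁' : (0:ℝ) ≤ c₁ := hc₁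
  have hc₂' : (0:ℝ) ≤ c₂ := hc₂
  set v : ℝ → ℝ := fun y => Real.exp (-(st10G m c₁ y)) with hv
  set w : ℝ → ℝ := fun y => Real.exp (-(st10G m c₂ y)) with hw
  have ha1 : a c₁ = ∫ y in Ioi (0:ℝ), v y := by rw [ha]; simp only [hgG]; rfl
  have ha2 : a c₂ = ∫ y in Ioi (0:ℝ), w y := by rw [ha]; simp only [hgG]; rfl
  have hb1 : b₁ c₁ = ∫ y in Ioi (0:ℝ), y * v y := by rw [hb]; simp only [hgG]; rfl
  have hb2 : b₁ c₂ = ∫ y in Ioi (0:ℝ), y * w y := by rw [hb]; simp only [hgG]; rfl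
  have hiv : IntegrableOn v (Ioi 0) := st10_int_v hm0 hm1 hc₁'
  have hiw : IntegrableOn w (Ioi 0) := st10_int_v hm0 hm1 hc₂'
  have hiyv : IntegrableOn (fun y => y * v y) (Ioi 0) := st10_int_yv hm0 hm1 hc₁'
  have hiyw : IntegrableOn (fun y => y * w y) (Ioi 0) := st10_int_yv hm0 hm1 hc₂'
  have pa1 : 0 < ∫ y in Ioi (0:ℝ), v y := st10_a_pos hm0 hm1 hc₁'
  have pa2 : 0 < ∫ y in Ioi (0:ℝ), w y := st10_a_pos hm0 hm1 hc₂'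
  set μ : Measure ℝ := volume.restrict (Ioi 0) with hμ
  set F : ℝ × ℝ → ℝ := fun p => (p.2 - p.1) * (v p.1 * w p.2 - w p.1 * v p.2) with hF
  have hFdec : F = fun p : ℝ × ℝ =>
      v p.1 * (p.2 * w p.2) - (p.1 * v p.1) * w p.2
        - w p.1 * (p.2 * v p.2) + (p.1 * w p.1) * v p.2 := by
    funext p; simp only [hF]; ring
  have hprod : μ.prod μ = (volume.prod volume).restrict ((Ioi (0:ℝ)) ×ˢ (Ioi (0:ℝ))) :=
    Measure.prod_restrict _ _
  have hi1 : Integrable (fun p : ℝ × ℝ => v p.1 * (p.2 * w p.2)) (μ.prod μ) :=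
    hiv.mul_prod hiyw
  have hi2 : Integrable (fun p : ℝ × ℝ => (p.1 * v p.1) * w p.2) (μ.prod μ) :=
    hiyv.mul_prod hiw
  have hi3 : Integrable (fun p : ℝ × ℝ => w p.1 * (p.2 * v p.2)) (μ.prod μ) :=
    hiw.mul_prod hiyv
  have hi4 : Integrable (fun p : ℝ × ℝ => (p.1 * w p.1) * v p.2) (μ.prod μ) :=
    hiyw.mul_prod hiv
  have hiF : Integrable F (μ.prod μ) := by
    rw [hFdec]; exact ((hi1.sub hi2).sub hi3).add hi4
  have hFle : ∀ p : ℝ × ℝ, p ∈ (Ioi (0:ℝ)) ×ˢ (Ioi (0:ℝ)) → F p ≤ 0 := by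
    rintro ⟨x, y⟩ ⟨hx, hy⟩
    simp only [hF]
    rcases le_total x y with hxy | hxy
    · apply mul_nonpos_of_nonneg_of_nonpos (by simp; linarith)
      have key := st10_key_le hm1 hc₁' h12 (le_of_lt hx) hxy
      simp only [hv, hw, ← Real.exp_add]
      exact sub_nonpos.2 (exp_le_exp.2 (by linarith))
    · apply mul_nonpos_of_nonpos_of_nonneg (by simp; linarith)
      have key := st10_key_le hm1 hc₁' h12 (le_of_lt hy) hxy
      simp only [hv, hw, ← Real.exp_add]
      exact sub_nonneg.2 (exp_le_exp.2 (by linarith))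
  have hneg : (∫ p, F p ∂(μ.prod μ)) < 0 := by
    have h1 : 0 < ∫ p, (-F) p ∂(μ.prod μ) := by
      rw [integral_pos_iff_support_of_nonneg_ae ?_ hiF.neg]
      · set U : Set (ℝ × ℝ) := {p | c₁ < p.1} ∩ {p | p.1 < p.2} with hUdef
        have hUopen : IsOpen U :=
          (isOpen_lt continuous_const continuous_fst).inter
            (isOpen_lt continuous_fst continuous_snd)
        have hUsub : U ⊆ (Ioi (0:ℝ)) ×ˢ (Ioi (0:ℝ)) := by
          rintro ⟨x, y⟩ ⟨h1, h2⟩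
          simp only [mem_setOf_eq] at h1 h2
          exact ⟨lt_of_le_of_lt hc₁' h1, lt_trans (lt_of_le_of_lt hc₁' h1) h2⟩
        have hUsupp : U ⊆ Function.support (-F) := by
          rintro ⟨x, y⟩ ⟨h1, h2⟩
          simp only [mem_setOf_eq] at h1 h2
          have key := st10_key_lt hm1 hc₁' h12 h1 h2
          have hlt : v x * w y < w x * v y := by
            simp only [hv, hw, ← Real.exp_add]
            exact exp_lt_exp.2 (by linarith)
          have : F (x, y) < 0 := by
            simp only [hF]
            exact mul_neg_of_pos_of_neg (by simp; linarith) (by linarith)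
          simp only [Function.mem_support, Pi.neg_apply]
          intro hcon
          rw [neg_eq_zero] at hcon
          exact absurd hcon (ne_of_lt this)
        have hUmeas : (μ.prod μ) U = (volume.prod volume) U := by
          rw [hprod, Measure.restrict_apply hUopen.measurableSet,
            inter_eq_left.2 hUsub]
        have hUpos : 0 < (volume.prod volume) U :=
          hUopen.measure_pos _ ⟨(c₁ + 1, c₁ + 2), by
            constructor <;> simp only [mem_setOf_eq] <;> norm_num⟩
        refine lt_of_lt_of_le ?_ (measure_mono hUsupp)
        rw [hUmeas]; exact hUpos
      · rw [hprod]
        refine (ae_restrict_iff' ((measurableSet_Ioi).prod measurableSet_Ioi)).2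
          (Filter.Eventually.of_forall fun p hp => ?_)
        simpa using hFle p hp
    have h2 : (∫ p, (-F) p ∂(μ.prod μ)) = -∫ p, F p ∂(μ.prod μ) := by
      simpa using integral_neg (μ := μ.prod μ) F
    linarith
  have hcalc : (∫ p, F p ∂(μ.prod μ))
      = (∫ x, v x ∂μ) * (∫ y, y * w y ∂μ) - (∫ x, x * v x ∂μ) * (∫ y, w y ∂μ)
        - (∫ x, w x ∂μ) * (∫ y, y * v y ∂μ) + (∫ x, x * w x ∂μ) * (∫ y, v y ∂μ) := by
    have e1 : (∫ p : ℝ × ℝ, v p.1 * (p.2 * w p.2) ∂(μ.prod μ))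
        = (∫ x, v x ∂μ) * (∫ y, y * w y ∂μ) := integral_prod_mul v (fun y => y * w y)
    have e2 : (∫ p : ℝ × ℝ, (p.1 * v p.1) * w p.2 ∂(μ.prod μ))
        = (∫ x, x * v x ∂μ) * (∫ y, w y ∂μ) := integral_prod_mul (fun x => x * v x) w
    have e3 : (∫ p : ℝ × ℝ, w p.1 * (p.2 * v p.2) ∂(μ.prod μ))
        = (∫ x, w x ∂μ) * (∫ y, y * v y ∂μ) := integral_prod_mul w (fun y => y * v y)
    have e4 : (∫ p : ℝ × ℝ, (p.1 * w p.1) * v p.2 ∂(μ.prod μ))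
        = (∫ x, x * w x ∂μ) * (∫ y, v y ∂μ) := integral_prod_mul (fun x => x * w x) v
    have hi12 : Integrable (fun p : ℝ × ℝ =>
        v p.1 * (p.2 * w p.2) - (p.1 * v p.1) * w p.2) (μ.prod μ) := hi1.sub hi2
    have hi123 : Integrable (fun p : ℝ × ℝ =>
        v p.1 * (p.2 * w p.2) - (p.1 * v p.1) * w p.2 - w p.1 * (p.2 * v p.2)) (μ.prod μ) :=
      hi12.sub hi3
    rw [hFdec, integral_add hi123 hi4, integral_sub hi12 hi3, integral_sub hi1 hi2,
      e1, e2, e3, e4]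
  rw [ha1, ha2, hb1, hb2, div_lt_div_iff₀ pa2 pa1]
  linarith [hneg, hcalc]
end

section
/- Let g: ℝ → ℝ be an (M_1, M_2)-admissible convex function (g(0)=g'(0)=0, piecewise C^2, M_1 ≤ g'' ≤ M_2 with 0 < M_1 < M_2). Let t̄(g) = ∫_ℝ t e^{-g(t)} dt / ∫_ℝ e^{-g(t)} dt be the center of mass. Then |t̄(g)| ≤ √(2/(π M_1)) (1 − 1/√m), where m = M_2/M_1. -/
open MeasureTheory Real Set
open Filter

lemma gauss_half_moment {b : ℝ} (hb : 0 < b) :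
    ∫ x in Ioi (0:ℝ), x * exp (-b * x ^ 2) = 1 / (2 * b) := by
  have hderiv : ∀ x ∈ Ici (0:ℝ), HasDerivAt (fun x : ℝ => -exp (-b * x ^ 2) / (2 * b))
      (x * exp (-b * x ^ 2)) x := by
    intro x _
    have h1 : HasDerivAt (fun x : ℝ => -b * x ^ 2) (-b * (2 * x)) x := by
      simpa using ((hasDerivAt_pow 2 x).const_mul (-b))
    have h2 := (h1.exp).neg.div_const (2 * b)
    refine h2.congr_deriv ?_
    field_simp
  have htend : Tendsto (fun x : ℝ => -exp (-b * x ^ 2) / (2 * b)) atTop (nhds 0) := by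
    have h0 : Tendsto (fun x : ℝ => -b * x ^ 2) atTop atBot := by
      apply Tendsto.const_mul_atTop_of_neg (neg_neg_iff_pos.mpr hb)
      exact tendsto_pow_atTop (by norm_num)
    have h3 := (Real.tendsto_exp_atBot.comp h0).neg.div_const (2 * b)
    simpa using h3
  have heq := integral_Ioi_of_hasDerivAt_of_tendsto' hderiv
    ((integrable_mul_exp_neg_mul_sq hb).integrableOn) htend
  rw [heq]
  norm_num
  rw [inv_eq_one_div]
  ring

lemma integrableOn_aux {M c : ℝ} (hM : 0 < M) {h : ℝ → ℝ} (hcont : Continuous h)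
    (hlow : ∀ t, 0 ≤ t → M/2 * t^2 ≤ h t) :
    IntegrableOn (fun t => (t + c) * exp (-h t)) (Ioi (0:ℝ)) := by
  have hb : 0 < M/2 := by linarith
  have hg : IntegrableOn (fun t : ℝ => t * exp (-(M/2) * t^2) + |c| * exp (-(M/2) * t^2))
      (Ioi (0:ℝ)) :=
    ((integrable_mul_exp_neg_mul_sq hb).add
      ((integrable_exp_neg_mul_sq hb).const_mul |c|)).integrableOn
  refine Integrable.mono' hg ?_ ?_
  · exact (Continuous.aestronglyMeasurable (by continuity)).restrict
  · filter_upwards [ae_restrict_mem measurableSet_Ioi] with t ht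
    have ht0 : (0:ℝ) < t := ht
    have hb1 : exp (-h t) ≤ exp (-(M/2) * t^2) := by
      apply exp_le_exp.mpr
      have := hlow t ht0.le
      linarith
    have : ‖(t + c) * exp (-h t)‖ ≤ |t + c| * exp (-(M/2) * t^2) := by
      rw [norm_mul, norm_eq_abs, norm_eq_abs, abs_exp]
      exact mul_le_mul_of_nonneg_left hb1 (abs_nonneg _)
    refine this.trans ?_
    have h2 : |t + c| ≤ t + |c| := by
      calc |t + c| ≤ |t| + |c| := abs_add_le _ _
      _ = t + |c| := by rw [abs_of_pos ht0]
    calc |t + c| * exp (-(M/2) * t^2) ≤ (t + |c|) * exp (-(M/2) * t^2) :=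
          mul_le_mul_of_nonneg_right h2 (exp_pos _).le
      _ = t * exp (-(M/2) * t^2) + |c| * exp (-(M/2) * t^2) := by ring

lemma gauss_comb {M c : ℝ} (hM : 0 < M) :
    ∫ t in Ioi (0:ℝ), (t + c) * exp (-(M/2) * t^2)
      = 1/M + c * (Real.sqrt (π/(M/2))/2) := by
  have hb : 0 < M/2 := by linarith
  have e1 : ∫ t in Ioi (0:ℝ), (t + c) * exp (-(M/2) * t^2)
      = (∫ t in Ioi (0:ℝ), t * exp (-(M/2) * t^2))
        + ∫ t in Ioi (0:ℝ), c * exp (-(M/2) * t^2) := by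
    rw [← integral_add ((integrable_mul_exp_neg_mul_sq hb).integrableOn)
      (((integrable_exp_neg_mul_sq hb).const_mul c).integrableOn)]
    congr 1; ext t; ring
  rw [e1, gauss_half_moment hb, MeasureTheory.integral_const_mul, integral_gaussian_Ioi]
  have : (1:ℝ)/(2*(M/2)) = 1/M := by ring_nf
  rw [this]

lemma sqrt_helper {M : ℝ} (hM : 0 < M) :
    Real.sqrt (2/π) * (Real.sqrt (π/(M/2))/2) = 1/Real.sqrt M := by
  have hpi := Real.pi_pos
  have h1 : Real.sqrt (2/π) * Real.sqrt (π/(M/2)) = Real.sqrt (4/M) := by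
    rw [← Real.sqrt_mul (by positivity)]
    congr 1
    field_simp
    ring
  have h2 : Real.sqrt (4/M) = 2 / Real.sqrt M := by
    rw [Real.sqrt_div' 4 hM.le] at *
    · norm_num
  calc Real.sqrt (2/π) * (Real.sqrt (π/(M/2))/2)
      = (Real.sqrt (2/π) * Real.sqrt (π/(M/2)))/2 := by ring
    _ = (2/Real.sqrt M)/2 := by rw [h1, h2]
    _ = 1/Real.sqrt M := by ring

lemma gauss_comb' {M c : ℝ} (hM : 0 < M) :
    ∫ t in Ioi (0:ℝ), (t + c) * Real.exp (-(M/2 * t^2))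
      = 1/M + c * (Real.sqrt (π/(M/2))/2) := by
  rw [← gauss_comb (c := c) hM]
  congr 1; ext t; ring_nf

lemma contQuad {M : ℝ} : Continuous (fun t : ℝ => M/2 * t^2) :=
  continuous_const.mul (continuous_pow 2)

lemma lower_side {M₁ M₂ c : ℝ} (h1 : 0 < M₁) (h2 : 0 < M₂) (h12 : M₁ ≤ M₂) (hc : 0 ≤ c)
    {h : ℝ → ℝ} (hcont : Continuous h)
    (hlow : ∀ t, 0 ≤ t → M₁/2 * t^2 ≤ h t)
    (hup : ∀ t, 0 ≤ t → h t ≤ M₂/2 * t^2) :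
    1/M₂ + c * (Real.sqrt (π/(M₂/2))/2) ≤ ∫ t in Ioi (0:ℝ), (t + c) * exp (-h t) := by
  rw [← gauss_comb' (c := c) h2]
  have hint1 : IntegrableOn (fun t => (t + c) * Real.exp (-(M₂/2 * t^2))) (Ioi (0:ℝ)) :=
    integrableOn_aux h2 (h := fun t => M₂/2 * t^2) contQuad
      (fun t _ => by nlinarith [sq_nonneg t])
  have hint2 : IntegrableOn (fun t => (t + c) * Real.exp (-h t)) (Ioi (0:ℝ)) :=
    integrableOn_aux h1 hcont hlow
  refine setIntegral_mono_on hint1 hint2 measurableSet_Ioi ?_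
  intro t ht
  have ht0 : (0:ℝ) < t := ht
  have he : exp (-(M₂/2 * t^2)) ≤ exp (-h t) := by
    apply exp_le_exp.mpr; have := hup t ht0.le; linarith
  exact mul_le_mul_of_nonneg_left he (by linarith)

lemma integrableOn_aux' {M c : ℝ} (hM : 0 < M) {h : ℝ → ℝ} (hcont : Continuous h)
    (hlow : ∀ t, 0 ≤ t → M/2 * t^2 ≤ h t) :
    IntegrableOn (fun t => (t - c) * Real.exp (-h t)) (Ioi (0:ℝ)) := by
  have := integrableOn_aux (c := -c) hM hcont hlow
  simpa [sub_eq_add_neg] using this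

lemma upper_side {M₁ c K : ℝ} (h1 : 0 < M₁) (hc : 0 ≤ c) (hK0 : 0 ≤ K)
    (hKval : ∫ s in Ioi (0:ℝ), (s - c) * exp (-(M₁/2 * s^2)) = K)
    {h h' : ℝ → ℝ} (hcont : Continuous h) (h0 : h 0 = 0)
    (hder : ∀ t, 0 < t → HasDerivAt h (h' t) t)
    (hd : ∀ t, 0 < t → M₁ * t ≤ h' t)
    (hlow : ∀ t, 0 ≤ t → M₁/2 * t^2 ≤ h t) :
    ∫ t in Ioi (0:ℝ), (t - c) * exp (-h t) ≤ K := by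
  set φ : ℝ → ℝ := fun s => (s - c) * exp (-(M₁/2 * s^2)) with hφ
  set ψ : ℝ → ℝ := fun s => (s - c) * exp (-h s) with hψ
  have hφc : Continuous φ := by
    exact (continuous_id.sub continuous_const).mul (contQuad.neg.rexp)
  have hψc : Continuous ψ := by
    exact (continuous_id.sub continuous_const).mul (hcont.neg.rexp)
  have intφ : IntegrableOn φ (Ioi (0:ℝ)) :=
    integrableOn_aux' h1 contQuad (fun t _ => le_refl _)
  have intψ : IntegrableOn ψ (Ioi (0:ℝ)) := integrableOn_aux' h1 hcont hlow
  set F : ℝ → ℝ := fun t => K - ∫ s in (0:ℝ)..t, φ s with hF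
  have hFd : ∀ t : ℝ, HasDerivAt F (-(φ t)) t := by
    intro t
    exact ((hφc.integral_hasStrictDerivAt 0 t).hasDerivAt.const_sub K)
  have hF0 : F 0 = K := by simp [hF]
  have hFnonneg : ∀ t : ℝ, 0 ≤ t → 0 ≤ F t := by
    intro t ht
    rcases le_or_gt t c with htc | htc
    · have hint : ∫ s in (0:ℝ)..t, φ s ≤ 0 := by
        rw [intervalIntegral.integral_of_le ht]
        apply setIntegral_nonpos measurableSet_Ioc
        intro s hs
        have hs1 : s ≤ c := le_trans hs.2 htc
        have : s - c ≤ 0 := by linarith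
        exact mul_nonpos_of_nonpos_of_nonneg this (exp_pos _).le
      simp only [hF]; linarith
    · -- t > c ≥ 0 : F t = ∫_{Ioi t} φ ≥ 0
      have hsplit : (∫ s in Ioc (0:ℝ) t, φ s) + ∫ s in Ioi t, φ s = ∫ s in Ioi (0:ℝ), φ s := by
        rw [← setIntegral_union Ioc_disjoint_Ioi_same measurableSet_Ioi
          (intφ.mono_set Ioc_subset_Ioi_self) (intφ.mono_set (Ioi_subset_Ioi ht))]
        rw [Ioc_union_Ioi_eq_Ioi ht]
      have htail : (0:ℝ) ≤ ∫ s in Ioi t, φ s := by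
        apply setIntegral_nonneg measurableSet_Ioi
        intro s hs
        have : (0:ℝ) ≤ s - c := by have := hs.out; linarith
        exact mul_nonneg this (exp_pos _).le
      have : F t = ∫ s in Ioi t, φ s := by
        simp only [hF, intervalIntegral.integral_of_le ht, ← hKval]
        linarith [hsplit]
      linarith [this ▸ htail]
  -- u and w
  set u : ℝ → ℝ := fun t => exp (M₁/2 * t^2 - h t) * F t with hu
  set w : ℝ → ℝ := fun t => u t + ∫ s in (0:ℝ)..t, ψ s with hw
  have hqd : ∀ t : ℝ, HasDerivAt (fun t : ℝ => M₁/2 * t^2 - h t) (M₁ * t - h' t) t ∨ True := fun _ => Or.inr trivial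
  have hwd : ∀ t ∈ Ioi (0:ℝ), HasDerivAt w ((M₁ * t - h' t) * (exp (M₁/2 * t^2 - h t) * F t)) t := by
    intro t ht
    have ht0 : (0:ℝ) < t := ht
    have hq : HasDerivAt (fun t : ℝ => M₁/2 * t^2 - h t) (M₁ * t - h' t) t := by
      have hp : HasDerivAt (fun t : ℝ => M₁/2 * t^2) (M₁ * t) t := by
        have := (hasDerivAt_pow 2 t).const_mul (M₁/2)
        refine this.congr_deriv ?_
        simp; ring
      exact hp.sub (hder t ht0)
    have hud : HasDerivAt u ((M₁ * t - h' t) * (exp (M₁/2 * t^2 - h t) * F t)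
        + exp (M₁/2 * t^2 - h t) * (-(φ t))) t := by
      have := (hq.exp).mul (hFd t)
      refine this.congr_deriv ?_
      ring
    have hPd : HasDerivAt (fun t => ∫ s in (0:ℝ)..t, ψ s) (ψ t) t :=
      (hψc.integral_hasStrictDerivAt 0 t).hasDerivAt
    have := hud.add hPd
    refine this.congr_deriv ?_
    have hexp : exp (M₁/2 * t^2 - h t) * exp (-(M₁/2 * t^2)) = exp (-h t) := by
      rw [← Real.exp_add]; congr 1; ring
    simp only [hψ, hφ]
    linear_combination (-(t - c)) * hexp
  -- w is antitone on [0, ∞)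
  have hFcont : Continuous F := by
    have : Differentiable ℝ F := fun t => (hFd t).differentiableAt
    exact this.continuous
  have hucont : Continuous u := ((contQuad.sub hcont).rexp).mul hFcont
  have hPcont : Continuous (fun t => ∫ s in (0:ℝ)..t, ψ s) := by
    have : Differentiable ℝ (fun t => ∫ s in (0:ℝ)..t, ψ s) := fun t =>
      ((hψc.integral_hasStrictDerivAt 0 t).hasDerivAt).differentiableAt
    exact this.continuous
  have hwcont : Continuous w := hucont.add hPcont
  have hanti : AntitoneOn w (Ici (0:ℝ)) := by
    apply antitoneOn_of_deriv_nonpos (convex_Ici 0) hwcont.continuousOn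
    · intro t ht
      rw [interior_Ici] at ht
      exact ((hwd t ht).differentiableAt).differentiableWithinAt
    · intro t ht
      rw [interior_Ici] at ht
      rw [(hwd t ht).deriv]
      have ht0 : (0:ℝ) < t := ht
      apply mul_nonpos_of_nonpos_of_nonneg
      · have := hd t ht0; linarith
      · exact mul_nonneg (exp_pos _).le (hFnonneg t ht0.le)
  have hbound : ∀ T : ℝ, 0 ≤ T → (∫ s in (0:ℝ)..T, ψ s) ≤ K := by
    intro T hT
    have hwT : w T ≤ w 0 := hanti (self_mem_Ici) hT hT
    have hw0 : w 0 = K := by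
      simp only [hw, hu, intervalIntegral.integral_same, hF0, h0]
      norm_num
    have huT : 0 ≤ u T := mul_nonneg (exp_pos _).le (hFnonneg T hT)
    simp only [hw] at hwT hw0
    linarith
  have htend : Tendsto (fun T => ∫ s in (0:ℝ)..T, ψ s) atTop
      (nhds (∫ s in Ioi (0:ℝ), ψ s)) :=
    intervalIntegral_tendsto_integral_Ioi 0 intψ tendsto_id
  refine le_of_tendsto htend ?_
  filter_upwards [Ici_mem_atTop (0:ℝ)] with T hT
  exact hbound T hT

lemma Kval_upper {M₁ M₂ : ℝ} (h1 : 0 < M₁) (h2 : 0 < M₂) :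
    ∫ s in Ioi (0:ℝ), (s - (Real.sqrt (2/π) * (1/Real.sqrt M₁ - 1/Real.sqrt M₂)))
        * Real.exp (-(M₁/2 * s^2)) = 1/(Real.sqrt M₁ * Real.sqrt M₂) := by
  set c := Real.sqrt (2/π) * (1/Real.sqrt M₁ - 1/Real.sqrt M₂) with hc
  have e1 : ∫ s in Ioi (0:ℝ), (s - c) * Real.exp (-(M₁/2 * s^2))
      = 1/M₁ + (-c) * (Real.sqrt (π/(M₁/2))/2) := by
    have hfe : (fun s : ℝ => (s - c) * Real.exp (-(M₁/2 * s^2)))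
        = fun s : ℝ => (s + (-c)) * Real.exp (-(M₁/2 * s^2)) := by
      ext s; ring_nf
    rw [show (∫ s in Ioi (0:ℝ), (s - c) * Real.exp (-(M₁/2 * s^2)))
        = ∫ s in Ioi (0:ℝ), (s + (-c)) * Real.exp (-(M₁/2 * s^2)) from by rw [hfe]]
    exact gauss_comb' h1
  rw [e1]
  have ha : Real.sqrt M₁ ^ 2 = M₁ := Real.sq_sqrt h1.le
  have ha0 : (0:ℝ) < Real.sqrt M₁ := Real.sqrt_pos.mpr h1
  have hb0 : (0:ℝ) < Real.sqrt M₂ := Real.sqrt_pos.mpr h2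
  have e2 : (-c) * (Real.sqrt (π/(M₁/2))/2)
      = -((1/Real.sqrt M₁ - 1/Real.sqrt M₂) * (1/Real.sqrt M₁)) := by
    rw [hc]
    have := sqrt_helper h1
    linear_combination (1/Real.sqrt M₂ - 1/Real.sqrt M₁) * this
  rw [e2, ← ha]
  field_simp
  linear_combination Real.sqrt M₂ * Real.sq_sqrt (sq_nonneg (Real.sqrt M₁))
lemma Kval_lower {M₁ M₂ : ℝ} (h1 : 0 < M₁) (h2 : 0 < M₂) :
    1/M₂ + (Real.sqrt (2/π) * (1/Real.sqrt M₁ - 1/Real.sqrt M₂)) * (Real.sqrt (π/(M₂/2))/2)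
      = 1/(Real.sqrt M₁ * Real.sqrt M₂) := by
  have hb : Real.sqrt M₂ ^ 2 = M₂ := Real.sq_sqrt h2.le
  have ha0 : (0:ℝ) < Real.sqrt M₁ := Real.sqrt_pos.mpr h1
  have hb0 : (0:ℝ) < Real.sqrt M₂ := Real.sqrt_pos.mpr h2
  have e2 : (Real.sqrt (2/π) * (1/Real.sqrt M₁ - 1/Real.sqrt M₂)) * (Real.sqrt (π/(M₂/2))/2)
      = (1/Real.sqrt M₁ - 1/Real.sqrt M₂) * (1/Real.sqrt M₂) := by
    have := sqrt_helper h2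
    linear_combination (1/Real.sqrt M₁ - 1/Real.sqrt M₂) * this
  rw [e2, ← hb]
  field_simp
  linear_combination Real.sqrt M₁ * Real.sq_sqrt (sq_nonneg (Real.sqrt M₂))

lemma gbound_low {g : ℝ → ℝ} {M : ℝ} (hC1 : ContDiff ℝ 1 g) (hg0 : g 0 = 0)
    (hd1 : ∀ t, 0 ≤ t → M * t ≤ deriv g t)
    (hd2 : ∀ t, t ≤ 0 → deriv g t ≤ M * t) :
    ∀ t : ℝ, M/2 * t^2 ≤ g t := by
  have hdiff : Differentiable ℝ g := hC1.differentiable one_ne_zero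
  have hdc : Continuous (deriv g) := hC1.continuous_deriv le_rfl
  intro t
  rcases le_or_gt 0 t with ht | ht
  · have hftc : ∫ s in (0:ℝ)..t, deriv g s = g t - g 0 :=
      intervalIntegral.integral_deriv_eq_sub (fun x _ => hdiff x)
        (hdc.intervalIntegrable 0 t)
    have hmono : ∫ s in (0:ℝ)..t, M * s ≤ ∫ s in (0:ℝ)..t, deriv g s := by
      apply intervalIntegral.integral_mono_on ht
        ((continuous_const.mul continuous_id).intervalIntegrable 0 t)
        (hdc.intervalIntegrable 0 t)
      intro s hs
      exact hd1 s hs.1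
    have hval : ∫ s in (0:ℝ)..t, M * s = M/2 * t^2 := by
      rw [intervalIntegral.integral_const_mul, integral_id]
      ring
    rw [hftc, hval] at hmono
    linarith [hmono, hg0]
  · have hftc : ∫ s in t..(0:ℝ), deriv g s = g 0 - g t :=
      intervalIntegral.integral_deriv_eq_sub (fun x _ => hdiff x)
        (hdc.intervalIntegrable t 0)
    have hmono : ∫ s in t..(0:ℝ), deriv g s ≤ ∫ s in t..(0:ℝ), M * s := by
      apply intervalIntegral.integral_mono_on ht.le
        (hdc.intervalIntegrable t 0)
        ((continuous_const.mul continuous_id).intervalIntegrable t 0)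
      intro s hs
      exact hd2 s hs.2
    have hval : ∫ s in t..(0:ℝ), M * s = -(M/2 * t^2) := by
      rw [intervalIntegral.integral_const_mul, integral_id]
      ring
    rw [hftc, hval] at hmono
    linarith [hmono, hg0]

lemma gbound_up {g : ℝ → ℝ} {M : ℝ} (hC1 : ContDiff ℝ 1 g) (hg0 : g 0 = 0)
    (hd1 : ∀ t, 0 ≤ t → deriv g t ≤ M * t)
    (hd2 : ∀ t, t ≤ 0 → M * t ≤ deriv g t) :
    ∀ t : ℝ, g t ≤ M/2 * t^2 := by
  have key := gbound_low (g := fun t => -g t) (M := -M) (hC1.neg) (by simp [hg0]) ?_ ?_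
  · intro t
    have := key t
    nlinarith [this]
  · intro t ht
    have : deriv (fun t => -g t) t = -deriv g t := by
      simp [deriv.neg]
    rw [this]
    have := hd1 t ht
    linarith
  · intro t ht
    have : deriv (fun t => -g t) t = -deriv g t := by
      simp [deriv.neg]
    rw [this]
    have := hd2 t ht
    linarith

theorem stmt11 (g : ℝ → ℝ) (M₁ M₂ : ℝ) (h1 : 0 < M₁) (h12 : M₁ < M₂)
    (hC1 : ContDiff ℝ 1 g) (hg0 : g 0 = 0) (hg'0 : deriv g 0 = 0)
    (hsd : ∀ s t : ℝ, s ≤ t →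
      M₁ * (t - s) ≤ deriv g t - deriv g s ∧ deriv g t - deriv g s ≤ M₂ * (t - s)) :
    |(∫ t : ℝ, t * Real.exp (-g t)) / ∫ t : ℝ, Real.exp (-g t)| ≤
      Real.sqrt (2 / (π * M₁)) * (1 - 1 / Real.sqrt (M₂ / M₁)) := by
  have h2 : 0 < M₂ := h1.trans h12
  have ha0 : (0:ℝ) < Real.sqrt M₁ := Real.sqrt_pos.mpr h1
  have hb0 : (0:ℝ) < Real.sqrt M₂ := Real.sqrt_pos.mpr h2
  set c := Real.sqrt (2/π) * (1/Real.sqrt M₁ - 1/Real.sqrt M₂) with hcdef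
  set K := 1/(Real.sqrt M₁ * Real.sqrt M₂) with hKdef
  have hc : 0 ≤ c := by
    apply mul_nonneg (Real.sqrt_nonneg _)
    have hab : Real.sqrt M₁ ≤ Real.sqrt M₂ := Real.sqrt_le_sqrt h12.le
    have := one_div_le_one_div_of_le ha0 hab
    linarith
  have hK0 : (0:ℝ) ≤ K := by positivity
  -- derivative bounds
  have hd1 : ∀ t, 0 ≤ t → M₁ * t ≤ deriv g t := by
    intro t ht
    have := (hsd 0 t ht).1
    rw [hg'0] at this; simpa using this
  have hd1' : ∀ t, 0 ≤ t → deriv g t ≤ M₂ * t := by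
    intro t ht
    have := (hsd 0 t ht).2
    rw [hg'0] at this; simpa using this
  have hd2 : ∀ t, t ≤ 0 → deriv g t ≤ M₁ * t := by
    intro t ht
    have := (hsd t 0 ht).1
    rw [hg'0] at this; nlinarith [this]
  have hd2' : ∀ t, t ≤ 0 → M₂ * t ≤ deriv g t := by
    intro t ht
    have := (hsd t 0 ht).2
    rw [hg'0] at this; nlinarith [this]
  have B1 : ∀ t : ℝ, M₁/2 * t^2 ≤ g t := gbound_low hC1 hg0 hd1 hd2
  have B2 : ∀ t : ℝ, g t ≤ M₂/2 * t^2 := gbound_up hC1 hg0 hd1' hd2'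
  have hgc : Continuous g := hC1.continuous
  have hdiff : Differentiable ℝ g := hC1.differentiable one_ne_zero
  have hb1 : (0:ℝ) < M₁/2 := by linarith
  have hb2 : (0:ℝ) < M₂/2 := by linarith
  -- integrability on ℝ
  have intD : Integrable (fun t : ℝ => Real.exp (-g t)) := by
    apply Integrable.mono' (integrable_exp_neg_mul_sq hb1)
      (hgc.neg.rexp.aestronglyMeasurable : AEStronglyMeasurable (fun t : ℝ => Real.exp (-g t)))
    refine ae_of_all _ (fun t => ?_)
    rw [Real.norm_eq_abs, abs_exp]
    apply exp_le_exp.mpr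
    have := B1 t; linarith
  have intN : Integrable (fun t : ℝ => t * Real.exp (-g t)) := by
    apply Integrable.mono' ((integrable_mul_exp_neg_mul_sq hb1).abs)
      ((continuous_id.mul hgc.neg.rexp).aestronglyMeasurable : AEStronglyMeasurable (fun t : ℝ => t * Real.exp (-g t)))
    refine ae_of_all _ (fun t => ?_)
    rw [Real.norm_eq_abs, abs_mul, abs_exp, abs_mul, abs_exp]
    apply mul_le_mul_of_nonneg_left _ (abs_nonneg t)
    apply exp_le_exp.mpr
    have := B1 t; linarith
  set N := ∫ t : ℝ, t * Real.exp (-g t) with hN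
  set D := ∫ t : ℝ, Real.exp (-g t) with hD
  -- D positive
  have hDpos : 0 < D := by
    have hle : ∫ t : ℝ, Real.exp (-(M₂/2) * t^2) ≤ D := by
      apply integral_mono (integrable_exp_neg_mul_sq hb2) intD
      intro t
      apply exp_le_exp.mpr
      have := B2 t; nlinarith [this]
    have hgauss : ∫ t : ℝ, Real.exp (-(M₂/2) * t^2) = Real.sqrt (π/(M₂/2)) :=
      integral_gaussian (M₂/2)
    have : (0:ℝ) < Real.sqrt (π/(M₂/2)) :=
      Real.sqrt_pos.mpr (by positivity)
    linarith
  -- the shifted function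
  set G : ℝ → ℝ := fun t => g (-t) with hG
  have hGc : Continuous G := hgc.comp continuous_neg
  have hG0 : G 0 = 0 := by simp [hG, hg0]
  have hGder : ∀ t : ℝ, HasDerivAt G (-(deriv g (-t))) t := by
    intro t
    have h1' := (hdiff (-t)).hasDerivAt
    have h2' : HasDerivAt (fun x : ℝ => -x) (-1 : ℝ) t := (hasDerivAt_id t).neg
    have := h1'.comp t h2'
    exact this.congr_deriv (by ring)
  have hGlow : ∀ t, 0 ≤ t → M₁/2 * t^2 ≤ G t := by
    intro t _
    have := B1 (-t); simpa [hG, neg_sq] using this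
  have hGup : ∀ t, 0 ≤ t → G t ≤ M₂/2 * t^2 := by
    intro t _
    have := B2 (-t); simpa [hG, neg_sq] using this
  -- one-sided estimates
  have Hug : ∫ t in Ioi (0:ℝ), (t - c) * Real.exp (-g t) ≤ K :=
    upper_side h1 hc hK0 (Kval_upper h1 h2) hgc hg0
      (fun t _ => (hdiff t).hasDerivAt) (fun t ht => hd1 t ht.le) (fun t _ => B1 t)
  have HuG : ∫ t in Ioi (0:ℝ), (t - c) * Real.exp (-G t) ≤ K :=
    upper_side h1 hc hK0 (Kval_upper h1 h2) hGc hG0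
      (fun t _ => hGder t)
      (fun t ht => by have := hd2 (-t) (by linarith); linarith)
      hGlow
  have Hlg : K ≤ ∫ t in Ioi (0:ℝ), (t + c) * Real.exp (-g t) := by
    have := lower_side h1 h2 h12.le hc hgc (fun t _ => B1 t) (fun t _ => B2 t)
    rw [Kval_lower h1 h2] at this; exact this
  have HlG : K ≤ ∫ t in Ioi (0:ℝ), (t + c) * Real.exp (-G t) := by
    have := lower_side h1 h2 h12.le hc hGc hGlow hGup
    rw [Kval_lower h1 h2] at this; exact this
  -- whole line identities
  have intsub : Integrable (fun t : ℝ => (t - c) * Real.exp (-g t)) := by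
    have : (fun t : ℝ => (t - c) * Real.exp (-g t))
        = fun t : ℝ => t * Real.exp (-g t) - c * Real.exp (-g t) := by ext t; ring
    rw [this]; exact intN.sub (intD.const_mul c)
  have intadd : Integrable (fun t : ℝ => (t + c) * Real.exp (-g t)) := by
    have : (fun t : ℝ => (t + c) * Real.exp (-g t))
        = fun t : ℝ => t * Real.exp (-g t) + c * Real.exp (-g t) := by ext t; ring
    rw [this]; exact intN.add (intD.const_mul c)
  have esub : ∫ t : ℝ, (t - c) * Real.exp (-g t) = N - c * D := by
    have e : (fun t : ℝ => (t - c) * Real.exp (-g t))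
        = fun t : ℝ => t * Real.exp (-g t) - c * Real.exp (-g t) := by ext t; ring
    rw [e, integral_sub intN (intD.const_mul c), MeasureTheory.integral_const_mul]
  have eadd : ∫ t : ℝ, (t + c) * Real.exp (-g t) = N + c * D := by
    have e : (fun t : ℝ => (t + c) * Real.exp (-g t))
        = fun t : ℝ => t * Real.exp (-g t) + c * Real.exp (-g t) := by ext t; ring
    rw [e, integral_add intN (intD.const_mul c), MeasureTheory.integral_const_mul]
  -- split into halves
  have hsplit1 : N - c * D = (∫ t in Iic (0:ℝ), (t - c) * Real.exp (-g t))
      + ∫ t in Ioi (0:ℝ), (t - c) * Real.exp (-g t) := by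
    rw [← esub, ← intervalIntegral.integral_Iic_add_Ioi intsub.integrableOn intsub.integrableOn]
  have hsplit2 : N + c * D = (∫ t in Iic (0:ℝ), (t + c) * Real.exp (-g t))
      + ∫ t in Ioi (0:ℝ), (t + c) * Real.exp (-g t) := by
    rw [← eadd, ← intervalIntegral.integral_Iic_add_Ioi intadd.integrableOn intadd.integrableOn]
  -- left halves via reflection
  have href1 : ∫ t in Iic (0:ℝ), (t - c) * Real.exp (-g t)
      = -∫ t in Ioi (0:ℝ), (t + c) * Real.exp (-G t) := by
    have := integral_comp_neg_Ioi (0:ℝ) (fun x => (x - c) * Real.exp (-g x))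
    rw [neg_zero] at this
    rw [← this, ← integral_neg]
    apply setIntegral_congr_fun measurableSet_Ioi
    intro t _
    simp only [hG]
    ring
  have href2 : ∫ t in Iic (0:ℝ), (t + c) * Real.exp (-g t)
      = -∫ t in Ioi (0:ℝ), (t - c) * Real.exp (-G t) := by
    have := integral_comp_neg_Ioi (0:ℝ) (fun x => (x + c) * Real.exp (-g x))
    rw [neg_zero] at this
    rw [← this, ← integral_neg]
    apply setIntegral_congr_fun measurableSet_Ioi
    intro t _
    simp only [hG]
    ring
  -- conclude
  have goal1 : N ≤ c * D := by
    have : N - c * D ≤ -K + K := by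
      rw [hsplit1, href1]
      have := HlG
      linarith [Hug]
    linarith
  have goal2 : -(c * D) ≤ N := by
    have : -K + K ≤ N + c * D := by
      rw [hsplit2, href2]
      linarith [Hlg, HuG]
    linarith
  have habs : |N| ≤ c * D := abs_le.mpr ⟨goal2, goal1⟩
  have hceq : Real.sqrt (2 / (π * M₁)) * (1 - 1 / Real.sqrt (M₂ / M₁)) = c := by
    have hpi := Real.pi_pos
    have h2pi : (0:ℝ) ≤ 2/π := by positivity
    rw [show (2:ℝ)/(π * M₁) = (2/π)/M₁ by rw [div_div], Real.sqrt_div h2pi M₁,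
      Real.sqrt_div h2.le M₁, hcdef]
    field_simp
  rw [hceq, abs_div, abs_of_pos hDpos]
  rw [div_le_iff₀ hDpos]
  linarith [habs]
end

section
/- Let g be an (M_1,M_2)-admissible convex function on ℝ, and define ã(g) = ∫_ℝ e^{-g}, b̃(g) = ∫_ℝ (t − t̄)² e^{-g} dt with t̄ the center of mass, and d̃(g) = b̃(g)/ã(g)³. Then d̃(g) ≥ 1/12. -/
open MeasureTheory Real Set

theorem stmt13 (g : ℝ → ℝ) (M₁ M₂ : ℝ) (h1 : 0 < M₁) (h12 : M₁ < M₂)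
    (hC1 : ContDiff ℝ 1 g) (hg0 : g 0 = 0) (hg'0 : deriv g 0 = 0)
    (hsd : ∀ s t : ℝ, s ≤ t →
      M₁ * (t - s) ≤ deriv g t - deriv g s ∧ deriv g t - deriv g s ≤ M₂ * (t - s))
    (tbar : ℝ)
    (htbar : tbar = (∫ t : ℝ, t * Real.exp (-g t)) / ∫ t : ℝ, Real.exp (-g t)) :
    1/12 ≤ (∫ t : ℝ, (t - tbar)^2 * Real.exp (-g t)) /
      (∫ t : ℝ, Real.exp (-g t))^3 := by
  have hgdiff : Differentiable ℝ g := hC1.differentiable one_ne_zero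
  have hgcont : Continuous g := hgdiff.continuous
  -- lower bound: g t ≥ (M₁/2) t²
  have hglb : ∀ t : ℝ, M₁ / 2 * t ^ 2 ≤ g t := by
    intro t
    set h : ℝ → ℝ := fun s => g s - M₁ / 2 * s ^ 2 with hh
    have hhd : ∀ s : ℝ, HasDerivAt h (deriv g s - M₁ * s) s := by
      intro s
      have h1' : HasDerivAt g (deriv g s) s := (hgdiff s).hasDerivAt
      have h2' : HasDerivAt (fun s : ℝ => M₁ / 2 * s ^ 2) (M₁ * s) s := by
        have := (hasDerivAt_pow 2 s).const_mul (M₁ / 2)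
        refine this.congr_deriv ?_
        ring
      exact h1'.sub h2'
    have hcont : Continuous h := hgcont.sub (continuous_const.mul (continuous_pow 2))
    have hmono : MonotoneOn h (Set.Ici (0:ℝ)) := by
      apply monotoneOn_of_deriv_nonneg (convex_Ici 0) hcont.continuousOn
      · intro s hs
        exact (hhd s).differentiableAt.differentiableWithinAt
      · intro s hs
        rw [interior_Ici] at hs
        rw [(hhd s).deriv]
        have := (hsd 0 s (le_of_lt hs)).1
        rw [hg'0] at this
        nlinarith
    have hanti : AntitoneOn h (Set.Iic (0:ℝ)) := by
      apply antitoneOn_of_deriv_nonpos (convex_Iic 0) hcont.continuousOn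
      · intro s hs
        exact (hhd s).differentiableAt.differentiableWithinAt
      · intro s hs
        rw [interior_Iic] at hs
        rw [(hhd s).deriv]
        have := (hsd s 0 (le_of_lt hs)).1
        rw [hg'0] at this
        nlinarith
    have h0 : h 0 = 0 := by simp [hh, hg0]
    rcases le_or_gt 0 t with ht | ht
    · have := hmono Set.self_mem_Ici (Set.mem_Ici.mpr ht) ht
      rw [h0] at this
      simpa [hh] using this
    · have := hanti (Set.mem_Iic.mpr ht.le) Set.self_mem_Iic ht.le
      rw [h0] at this
      simpa [hh] using this
  have hexple : ∀ t : ℝ, Real.exp (-g t) ≤ Real.exp (-(M₁/2) * t ^ 2) := by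
    intro t
    apply Real.exp_le_exp.mpr
    nlinarith [hglb t]
  have hexp1 : ∀ t : ℝ, Real.exp (-g t) ≤ 1 := by
    intro t
    rw [show (1:ℝ) = Real.exp 0 by simp]
    apply Real.exp_le_exp.mpr
    nlinarith [hglb t, sq_nonneg t]
  have hcontf : Continuous fun t : ℝ => Real.exp (-g t) := Real.continuous_exp.comp hgcont.neg
  have hb2 : (0:ℝ) < M₁ / 2 := by linarith
  have hgauss : Integrable (fun t : ℝ => Real.exp (-(M₁/2) * t ^ 2)) :=
    integrable_exp_neg_mul_sq hb2
  have hintf : Integrable fun t : ℝ => Real.exp (-g t) := by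
    apply hgauss.mono' hcontf.aestronglyMeasurable
    filter_upwards with t
    rw [Real.norm_eq_abs, abs_of_pos (Real.exp_pos _)]
    exact hexple t
  set a : ℝ := ∫ t : ℝ, Real.exp (-g t) with ha
  have hapos : 0 < a := by
    rw [ha, integral_pos_iff_support_of_nonneg (fun t => (Real.exp_pos _).le) hintf]
    have hsupp : Function.support (fun t : ℝ => Real.exp (-g t)) = Set.univ := by
      ext t; simp [(Real.exp_pos (-g t)).ne']
    rw [hsupp]
    simp
  have hintq : Integrable fun t : ℝ => (t - tbar) ^ 2 * Real.exp (-g t) := by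
    have hdom : Integrable fun t : ℝ => (t - tbar) ^ 2 * Real.exp (-(M₁/2) * t ^ 2) := by
      have h0 := integrable_exp_neg_mul_sq hb2
      have h1' := integrable_mul_exp_neg_mul_sq hb2
      have h2' : Integrable fun x : ℝ => x ^ 2 * Real.exp (-(M₁/2) * x ^ 2) := by
        have := integrable_rpow_mul_exp_neg_mul_sq hb2 (s := 2) (by norm_num)
        simpa [Real.rpow_two] using this
      have hsum := (h2'.add (h1'.const_mul (-(2*tbar)))).add (h0.const_mul (tbar ^ 2))
      apply hsum.congr
      filter_upwards with t
      simp only [Pi.add_apply]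
      ring
    apply hdom.mono'
      (((continuous_id.sub continuous_const).pow 2).mul hcontf).aestronglyMeasurable
    filter_upwards with t
    show ‖(t - tbar) ^ 2 * Real.exp (-g t)‖ ≤ _
    rw [Real.norm_eq_abs, abs_of_nonneg (by positivity : (0:ℝ) ≤ (t - tbar) ^ 2 * Real.exp (-g t))]
    exact mul_le_mul_of_nonneg_left (hexple t) (by positivity : (0:ℝ) ≤ (t - tbar) ^ 2)
  set l : ℝ := tbar - a/2 with hl
  set u : ℝ := tbar + a/2 with hu
  have hlu : l ≤ u := by rw [hl, hu]; linarith
  set φ : ℝ → ℝ := fun t => (t - tbar) ^ 2 - a ^ 2 / 4 with hφ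
  have hφcont : Continuous φ := by
    rw [hφ]
    exact ((continuous_id.sub continuous_const).pow 2).sub continuous_const
  have hIOn : IntegrableOn φ (Set.Icc l u) := hφcont.continuousOn.integrableOn_compact isCompact_Icc
  have hindic : Integrable (Set.indicator (Set.Icc l u) φ) :=
    hIOn.integrable_indicator measurableSet_Icc
  have hLHSint : Integrable (fun t => a ^ 2 / 4 * Real.exp (-g t)
      + Set.indicator (Set.Icc l u) φ t) := (hintf.const_mul _).add hindic
  have hptwise : ∀ t : ℝ, a ^ 2 / 4 * Real.exp (-g t) + Set.indicator (Set.Icc l u) φ t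
      ≤ (t - tbar) ^ 2 * Real.exp (-g t) := by
    intro t
    by_cases ht : t ∈ Set.Icc l u
    · rw [Set.indicator_of_mem ht, hφ]
      obtain ⟨ht1, ht2⟩ := ht
      rw [hl] at ht1; rw [hu] at ht2
      have hsq : (t - tbar) ^ 2 ≤ a ^ 2 / 4 := by nlinarith
      nlinarith [mul_nonneg (sub_nonneg.mpr (hexp1 t)) (sub_nonneg.mpr hsq)]
    · rw [Set.indicator_of_notMem ht]
      rw [Set.mem_Icc, not_and_or] at ht
      have hsq : a ^ 2 / 4 ≤ (t - tbar) ^ 2 := by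
        rcases ht with h | h
        · push_neg at h; rw [hl] at h; nlinarith
        · push_neg at h; rw [hu] at h; nlinarith
      nlinarith [(Real.exp_pos (-g t)).le,
        mul_nonneg (sub_nonneg.mpr hsq) (Real.exp_pos (-g t)).le]
  have hmono := integral_mono hLHSint hintq hptwise
  have hI1 : ∫ t : ℝ, a ^ 2 / 4 * Real.exp (-g t) = a ^ 2 / 4 * a := by
    rw [MeasureTheory.integral_const_mul]
  have hI2 : ∫ t : ℝ, Set.indicator (Set.Icc l u) φ t = a ^ 3 / 12 - a ^ 3 / 4 := by
    rw [integral_indicator measurableSet_Icc, integral_Icc_eq_integral_Ioc,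
      ← intervalIntegral.integral_of_le hlu]
    have hi1 : IntervalIntegrable (fun x : ℝ => (x - tbar) ^ 2) volume l u :=
      Continuous.intervalIntegrable ((continuous_id.sub continuous_const).pow 2) l u
    have hi2 : IntervalIntegrable (fun _ : ℝ => a ^ 2 / 4) volume l u :=
      intervalIntegrable_const
    rw [hφ]
    rw [intervalIntegral.integral_sub hi1 hi2]
    rw [show (fun x : ℝ => (x - tbar) ^ 2) = fun x : ℝ => (fun y : ℝ => y ^ 2) (x - tbar) from rfl]
    rw [intervalIntegral.integral_comp_sub_right (fun y : ℝ => y ^ 2) tbar]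
    rw [integral_pow, intervalIntegral.integral_const]
    rw [hl, hu]
    push_cast
    simp only [smul_eq_mul]
    ring
  rw [integral_add (hintf.const_mul _) hindic, hI1, hI2] at hmono
  rw [le_div_iff₀ (by positivity : (0:ℝ) < a ^ 3)]
  nlinarith [hmono]
end

section
/- Let f₀ = Σ c_i x^i and f₁ = Σ c̄_i x^i both solve the balanced equation ∫_0^∞ c_i x^i/f₀ dx = ∫_0^∞ c̄_i x^i/f₁ dx = 1 − βδ_{0i}, normalized with c_0 = c̄_0 = 1, and extend c(i), c̄(i) to real i ≥ 1 via c(i) = (∫_0^∞ x^i/f₀ dx)^{-1}. Then the set Q = { c(i)/c̄(i) : i ∈ ℝ, i ≥ 1 } satisfies sup Q ∉ Q and inf Q ∉ Q, i.e. neither the supremum nor the infimum of the ratio c(i)/c̄(i) is attained. -/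
open MeasureTheory Real Set

lemma aux17_int_lt {g h : ℝ → ℝ} (hg : IntegrableOn g (Set.Ioi 0))
    (hh : IntegrableOn h (Set.Ioi 0))
    (hle : ∀ x ∈ Set.Ioi (0:ℝ), g x ≤ h x) {T : Set ℝ} (hT : T ⊆ Set.Ioi 0)
    (hTs : ∀ x ∈ T, g x < h x) (hμ : 0 < volume T) :
    (∫ x in Set.Ioi (0:ℝ), g x) < ∫ x in Set.Ioi (0:ℝ), h x := by
  have hd : IntegrableOn (fun x => h x - g x) (Set.Ioi 0) := hh.sub hg
  have hnn : 0 ≤ᵐ[volume.restrict (Set.Ioi (0:ℝ))] fun x => h x - g x := by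
    rw [Filter.EventuallyLE, ae_restrict_iff' measurableSet_Ioi]
    exact Filter.Eventually.of_forall fun x hx => sub_nonneg.mpr (hle x hx)
  have hpos : 0 < ∫ x in Set.Ioi (0:ℝ), (h x - g x) := by
    rw [setIntegral_pos_iff_support_of_nonneg_ae hnn hd]
    refine lt_of_lt_of_le hμ (measure_mono fun x hx => ?_)
    exact ⟨sub_ne_zero.mpr (hTs x hx).ne', hT hx⟩
  have := integral_sub hh hg
  rw [this] at hpos
  linarith

lemma aux17_ae_eq {g h : ℝ → ℝ} (hg : IntegrableOn g (Set.Ioi 0))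
    (hh : IntegrableOn h (Set.Ioi 0))
    (hle : ∀ x ∈ Set.Ioi (0:ℝ), g x ≤ h x)
    (heq : (∫ x in Set.Ioi (0:ℝ), g x) = ∫ x in Set.Ioi (0:ℝ), h x) :
    ∀ᵐ x ∂(volume.restrict (Set.Ioi (0:ℝ))), g x = h x := by
  have hd : IntegrableOn (fun x => h x - g x) (Set.Ioi 0) := hh.sub hg
  have hnn : 0 ≤ᵐ[volume.restrict (Set.Ioi (0:ℝ))] fun x => h x - g x := by
    rw [Filter.EventuallyLE, ae_restrict_iff' measurableSet_Ioi]
    exact Filter.Eventually.of_forall fun x hx => sub_nonneg.mpr (hle x hx)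
  have h0 : ∫ x in Set.Ioi (0:ℝ), (h x - g x) = 0 := by
    rw [integral_sub hh hg]; linarith
  have := (integral_eq_zero_iff_of_nonneg_ae hnn hd).mp h0
  filter_upwards [this] with x hx
  have : h x - g x = 0 := hx
  linarith

-- integrability of x^n / F on Ioi 0 from balance equation
lemma aux17_int_nat (β : ℝ) (hβ : β ∈ Set.Ico (0:ℝ) 1) (a : ℕ → ℝ) (ha : ∀ n, 0 < a n)
    (F : ℝ → ℝ)
    (hbal : ∀ n : ℕ, (∫ x in Set.Ioi (0:ℝ), a n * x ^ n / F x) = 1 - if n = 0 then β else 0)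
    (n : ℕ) : IntegrableOn (fun x => x ^ n / F x) (Set.Ioi (0:ℝ)) := by
  have hval : (1:ℝ) - (if n = 0 then β else 0) ≠ 0 := by
    rcases hβ with ⟨h0, h1⟩
    split <;> intro h <;> linarith
  have h1 : IntegrableOn (fun x => a n * x ^ n / F x) (Set.Ioi (0:ℝ)) := by
    by_contra h
    have := integral_undef h
    rw [hbal n] at this
    exact hval this
  have h2 := h1.const_mul (a n)⁻¹
  have : (fun x : ℝ => (a n)⁻¹ * (a n * x ^ n / F x)) = fun x : ℝ => x ^ n / F x := by
    funext x
    rw [← mul_div_assoc, ← mul_assoc, inv_mul_cancel₀ (ha n).ne', one_mul]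
  rwa [this] at h2

lemma aux17_int_rpow (β : ℝ) (hβ : β ∈ Set.Ico (0:ℝ) 1) (a : ℕ → ℝ) (ha : ∀ n, 0 < a n)
    (F : ℝ → ℝ) (hFnn : ∀ x : ℝ, 0 < x → 0 ≤ F x)
    (hbal : ∀ n : ℕ, (∫ x in Set.Ioi (0:ℝ), a n * x ^ n / F x) = 1 - if n = 0 then β else 0)
    {i : ℝ} (hi : 1 ≤ i) : IntegrableOn (fun x => x ^ i / F x) (Set.Ioi (0:ℝ)) := by
  set n : ℕ := ⌊i⌋₊ with hn
  have hni : (n : ℝ) ≤ i := Nat.floor_le (by linarith)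
  have hin : i ≤ (n : ℝ) + 1 := le_of_lt (Nat.lt_floor_add_one i)
  have hInt0 := aux17_int_nat β hβ a ha F hbal 0
  have hIntn := aux17_int_nat β hβ a ha F hbal n
  have hIntn1 := aux17_int_nat β hβ a ha F hbal (n + 1)
  have hmeas : AEStronglyMeasurable (fun x : ℝ => x ^ i / F x)
      (volume.restrict (Set.Ioi (0:ℝ))) := by
    have h0 : AEMeasurable (fun x : ℝ => x ^ (0:ℕ) / F x)
        (volume.restrict (Set.Ioi (0:ℝ))) := hInt0.aestronglyMeasurable.aemeasurable
    have hrpow : Measurable fun x : ℝ => x ^ i :=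
      (Real.continuous_rpow_const (by linarith)).measurable
    have : AEMeasurable (fun x : ℝ => x ^ i * (x ^ (0:ℕ) / F x))
        (volume.restrict (Set.Ioi (0:ℝ))) := hrpow.aemeasurable.mul h0
    have heq : (fun x : ℝ => x ^ i * (x ^ (0:ℕ) / F x)) = fun x : ℝ => x ^ i / F x := by
      funext x; simp [div_eq_mul_inv, mul_assoc]
    rw [heq] at this
    exact this.aestronglyMeasurable
  refine Integrable.mono' (hIntn.add hIntn1) hmeas ?_
  rw [ae_restrict_iff' measurableSet_Ioi]
  refine Filter.Eventually.of_forall fun x hx => ?_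
  have hx0 : (0:ℝ) < x := hx
  have hFx := hFnn x hx0
  have hxb : x ^ i ≤ x ^ n + x ^ (n + 1) := by
    rcases le_total x 1 with hx1 | hx1
    · have : x ^ i ≤ x ^ (n : ℝ) := rpow_le_rpow_of_exponent_ge hx0 hx1 hni
      rw [rpow_natCast] at this
      have : x ^ i ≤ x ^ n := this
      nlinarith [pow_nonneg hx0.le (n+1)]
    · have : x ^ i ≤ x ^ ((n : ℝ) + 1) := rpow_le_rpow_of_exponent_le hx1 hin
      rw [show ((n:ℝ) + 1) = ((n + 1 : ℕ) : ℝ) by push_cast; ring, rpow_natCast] at this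
      nlinarith [pow_nonneg hx0.le n]
  have hnn : 0 ≤ x ^ i / F x := div_nonneg (rpow_pos_of_pos hx0 i).le hFx
  rw [Real.norm_eq_abs, abs_of_nonneg hnn]
  rcases eq_or_lt_of_le hFx with hF0 | hF0
  · simp [← hF0, div_nonneg (pow_nonneg hx0.le n) le_rfl, pow_nonneg hx0.le]
  · calc x ^ i / F x ≤ (x ^ n + x ^ (n + 1)) / F x := by
          exact div_le_div_of_nonneg_right hxb hF0.le
        _ = x ^ n / F x + x ^ (n + 1) / F x := add_div _ _ _

-- positivity of support measure of 1/F
lemma aux17_supp (β : ℝ) (hβ : β ∈ Set.Ico (0:ℝ) 1) (a : ℕ → ℝ) (ha : ∀ n, 0 < a n)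
    (ha0 : a 0 = 1) (F : ℝ → ℝ) (hFnn : ∀ x : ℝ, 0 < x → 0 ≤ F x)
    (hbal : ∀ n : ℕ, (∫ x in Set.Ioi (0:ℝ), a n * x ^ n / F x) = 1 - if n = 0 then β else 0) :
    0 < volume (Function.support (fun x : ℝ => 1 / F x) ∩ Set.Ioi 0) := by
  have hfun : (fun x : ℝ => x ^ (0:ℕ) / F x) = fun x : ℝ => 1 / F x := by
    funext x; simp
  have hint : IntegrableOn (fun x : ℝ => 1 / F x) (Set.Ioi (0:ℝ)) := by
    have := aux17_int_nat β hβ a ha F hbal 0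
    rwa [hfun] at this
  have hpos : 0 < ∫ x in Set.Ioi (0:ℝ), 1 / F x := by
    have h := hbal 0
    have hfun2 : (fun x : ℝ => a 0 * x ^ (0:ℕ) / F x) = fun x : ℝ => 1 / F x := by
      funext x; simp [ha0]
    rw [show (∫ x in Set.Ioi (0:ℝ), a 0 * x ^ (0:ℕ) / F x) = ∫ x in Set.Ioi (0:ℝ), 1 / F x from
      by rw [← hfun2]] at h
    rw [h]
    have hit : (if (0:ℕ) = 0 then β else 0) = β := if_pos rfl
    rw [hit]
    rcases hβ with ⟨_, h1⟩; linarith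
  have hnn : 0 ≤ᵐ[volume.restrict (Set.Ioi (0:ℝ))] fun x : ℝ => 1 / F x := by
    rw [Filter.EventuallyLE, ae_restrict_iff' measurableSet_Ioi]
    exact Filter.Eventually.of_forall fun x hx => one_div_nonneg.mpr (hFnn x hx)
  exact (setIntegral_pos_iff_support_of_nonneg_ae hnn hint).mp hpos

lemma aux17_int_pos (β : ℝ) (hβ : β ∈ Set.Ico (0:ℝ) 1) (a : ℕ → ℝ) (ha : ∀ n, 0 < a n)
    (ha0 : a 0 = 1) (F : ℝ → ℝ) (hFnn : ∀ x : ℝ, 0 < x → 0 ≤ F x)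
    (hbal : ∀ n : ℕ, (∫ x in Set.Ioi (0:ℝ), a n * x ^ n / F x) = 1 - if n = 0 then β else 0)
    {i : ℝ} (hi : 1 ≤ i) : 0 < ∫ x in Set.Ioi (0:ℝ), x ^ i / F x := by
  have hint := aux17_int_rpow β hβ a ha F hFnn hbal hi
  have hnn : 0 ≤ᵐ[volume.restrict (Set.Ioi (0:ℝ))] fun x : ℝ => x ^ i / F x := by
    rw [Filter.EventuallyLE, ae_restrict_iff' measurableSet_Ioi]
    exact Filter.Eventually.of_forall fun x hx =>
      div_nonneg (rpow_pos_of_pos hx i).le (hFnn x hx)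
  rw [setIntegral_pos_iff_support_of_nonneg_ae hnn hint]
  refine lt_of_lt_of_le (aux17_supp β hβ a ha ha0 F hFnn hbal) (measure_mono ?_)
  rintro x ⟨hs, hx⟩
  refine ⟨?_, hx⟩
  have hF : F x ≠ 0 := by
    intro h; apply hs; simp [h]
  exact div_ne_zero (rpow_pos_of_pos hx i).ne' hF

lemma aux17_key (β : ℝ) (hβ : β ∈ Set.Ico (0:ℝ) 1)
    (a b : ℕ → ℝ) (ha : ∀ n, 0 < a n) (hb : ∀ n, 0 < b n) (ha0 : a 0 = 1) (hb0 : b 0 = 1)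
    (F G : ℝ → ℝ) (hF : ∀ x, F x = ∑' n : ℕ, a n * x ^ n)
    (hG : ∀ x, G x = ∑' n : ℕ, b n * x ^ n)
    (hne : F ≠ G)
    (hbalF : ∀ n : ℕ, (∫ x in Set.Ioi (0:ℝ), a n * x ^ n / F x) = 1 - if n = 0 then β else 0)
    (hbalG : ∀ n : ℕ, (∫ x in Set.Ioi (0:ℝ), b n * x ^ n / G x) = 1 - if n = 0 then β else 0)
    (K : ℝ) (hK : 0 < K) (j : ℝ) (hj : 1 ≤ j)
    (hle : ∀ n : ℕ, n ≠ 0 → a n ≤ K * b n)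
    (heq : (∫ x in Set.Ioi (0:ℝ), x ^ j / F x) = K⁻¹ * ∫ x in Set.Ioi (0:ℝ), x ^ j / G x) :
    False := by
  obtain ⟨hβ0, hβ1⟩ := hβ
  have h1β : (0:ℝ) < 1 - β := by linarith
  have hFnn : ∀ x : ℝ, 0 < x → 0 ≤ F x := fun x hx => by
    rw [hF]; exact tsum_nonneg fun n => mul_nonneg (ha n).le (pow_nonneg hx.le n)
  have hGnn : ∀ x : ℝ, 0 < x → 0 ≤ G x := fun x hx => by
    rw [hG]; exact tsum_nonneg fun n => mul_nonneg (hb n).le (pow_nonneg hx.le n)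
  have hGpos : ∀ x : ℝ, 0 < x → G x ≠ 0 →
      Summable (fun n : ℕ => b n * x ^ n) ∧ 1 ≤ G x := by
    intro x hx hGx
    have hs : Summable (fun n : ℕ => b n * x ^ n) := by
      by_contra hs
      exact hGx (by rw [hG]; exact tsum_eq_zero_of_not_summable hs)
    refine ⟨hs, ?_⟩
    rw [hG]
    have := Summable.le_tsum hs 0 (fun m _ => mul_nonneg (hb m).le (pow_nonneg hx.le m))
    simpa [hb0] using this
  have hFge1 : ∀ x : ℝ, 0 < x → Summable (fun n : ℕ => a n * x ^ n) → 1 ≤ F x := by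
    intro x hx hs
    rw [hF]
    have := Summable.le_tsum hs 0 (fun m _ => mul_nonneg (ha m).le (pow_nonneg hx.le m))
    simpa [ha0] using this
  have hTpos := aux17_supp β ⟨hβ0, hβ1⟩ b hb hb0 G hGnn hbalG
  set T := Function.support (fun x : ℝ => 1 / G x) ∩ Set.Ioi 0 with hT
  have hTsub : T ⊆ Set.Ioi (0:ℝ) := inter_subset_right
  have hTprop : ∀ x ∈ T, 0 < x ∧ G x ≠ 0 := by
    intro x hx
    refine ⟨hx.2, fun h => ?_⟩
    have := hx.1
    rw [Function.mem_support] at this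
    exact this (by rw [h]; simp)
  have hIF : (∫ x in Set.Ioi (0:ℝ), 1 / F x) = 1 - β := by
    have h := hbalF 0
    have hit : (if (0:ℕ) = 0 then β else 0) = β := if_pos rfl
    rw [hit] at h
    rw [← h]
    exact setIntegral_congr_fun measurableSet_Ioi (fun x _ => by simp [ha0])
  have hIG : (∫ x in Set.Ioi (0:ℝ), 1 / G x) = 1 - β := by
    have h := hbalG 0
    have hit : (if (0:ℕ) = 0 then β else 0) = β := if_pos rfl
    rw [hit] at h
    rw [← h]
    exact setIntegral_congr_fun measurableSet_Ioi (fun x _ => by simp [hb0])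
  have hIntF1 : IntegrableOn (fun x : ℝ => 1 / F x) (Set.Ioi 0) := by
    have := aux17_int_nat β ⟨hβ0, hβ1⟩ a ha F hbalF 0
    have hfun : (fun x : ℝ => x ^ (0:ℕ) / F x) = fun x : ℝ => 1 / F x := by funext x; simp
    rwa [hfun] at this
  have hIntG1 : IntegrableOn (fun x : ℝ => 1 / G x) (Set.Ioi 0) := by
    have := aux17_int_nat β ⟨hβ0, hβ1⟩ b hb G hbalG 0
    have hfun : (fun x : ℝ => x ^ (0:ℕ) / G x) = fun x : ℝ => 1 / G x := by funext x; simp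
    rwa [hfun] at this
  have hIntFj := aux17_int_rpow β ⟨hβ0, hβ1⟩ a ha F hFnn hbalF hj
  have hIntGj := aux17_int_rpow β ⟨hβ0, hβ1⟩ b hb G hGnn hbalG hj
  -- Step 1 : 1 ≤ K
  have hK1 : 1 ≤ K := by
    by_contra hK1
    push_neg at hK1
    have hab : ∀ n : ℕ, a n ≤ b n := by
      intro n
      rcases Nat.eq_zero_or_pos n with h0 | h0
      · rw [h0, ha0, hb0]
      · calc a n ≤ K * b n := hle n h0.ne'
          _ ≤ 1 * b n := by nlinarith [hb n]
          _ = b n := one_mul _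
    have hab1 : a 1 < b 1 := lt_of_le_of_lt (hle 1 one_ne_zero) (by nlinarith [hb 1])
    have hptle : ∀ x ∈ Set.Ioi (0:ℝ), 1 / G x ≤ 1 / F x := by
      intro x hx
      have hx0 : (0:ℝ) < x := hx
      by_cases hGx : G x = 0
      · rw [hGx, div_zero]
        exact one_div_nonneg.mpr (hFnn x hx0)
      · obtain ⟨hs, hG1⟩ := hGpos x hx0 hGx
        have hsa : Summable (fun n : ℕ => a n * x ^ n) :=
          hs.of_nonneg_of_le (fun n => mul_nonneg (ha n).le (pow_nonneg hx0.le n))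
            (fun n => mul_le_mul_of_nonneg_right (hab n) (pow_nonneg hx0.le n))
        have hFG : F x ≤ G x := by
          rw [hF, hG]
          exact Summable.tsum_le_tsum
            (fun n => mul_le_mul_of_nonneg_right (hab n) (pow_nonneg hx0.le n)) hsa hs
        have hF1 : (1:ℝ) ≤ F x := hFge1 x hx0 hsa
        exact one_div_le_one_div_of_le (by linarith) hFG
    have hptlt : ∀ x ∈ T, 1 / G x < 1 / F x := by
      intro x hxT
      obtain ⟨hx0, hGx⟩ := hTprop x hxT
      obtain ⟨hs, hG1⟩ := hGpos x hx0 hGx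
      have hsa : Summable (fun n : ℕ => a n * x ^ n) :=
        hs.of_nonneg_of_le (fun n => mul_nonneg (ha n).le (pow_nonneg hx0.le n))
          (fun n => mul_le_mul_of_nonneg_right (hab n) (pow_nonneg hx0.le n))
      have hFG : F x < G x := by
        rw [hF, hG]
        exact Summable.tsum_lt_tsum_of_nonneg
          (fun n => mul_nonneg (ha n).le (pow_nonneg hx0.le n))
          (fun n => mul_le_mul_of_nonneg_right (hab n) (pow_nonneg hx0.le n))
          (mul_lt_mul_of_pos_right hab1 (pow_pos hx0 1)) hs
      have hF1 : (1:ℝ) ≤ F x := hFge1 x hx0 hsa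
      exact one_div_lt_one_div_of_lt (by linarith) hFG
    have hlt := aux17_int_lt hIntG1 hIntF1 hptle hTsub hptlt hTpos
    rw [hIF, hIG] at hlt
    exact lt_irrefl _ hlt
  -- Step 2 : pointwise comparison
  have habK : ∀ n : ℕ, a n ≤ K * b n := by
    intro n
    rcases Nat.eq_zero_or_pos n with h0 | h0
    · rw [h0, ha0, hb0, mul_one]; exact hK1
    · exact hle n h0.ne'
  have hcomp : ∀ x ∈ Set.Ioi (0:ℝ), K⁻¹ * (x ^ j / G x) ≤ x ^ j / F x := by
    intro x hx
    have hx0 : (0:ℝ) < x := hx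
    by_cases hGx : G x = 0
    · rw [hGx, div_zero, mul_zero]
      exact div_nonneg (rpow_pos_of_pos hx0 j).le (hFnn x hx0)
    · obtain ⟨hs, hG1⟩ := hGpos x hx0 hGx
      have hsK : Summable (fun n : ℕ => K * (b n * x ^ n)) := hs.mul_left K
      have hsa : Summable (fun n : ℕ => a n * x ^ n) :=
        hsK.of_nonneg_of_le (fun n => mul_nonneg (ha n).le (pow_nonneg hx0.le n))
          (fun n => by nlinarith [habK n, pow_nonneg hx0.le n, (hb n).le])
      have hFKG : F x ≤ K * G x := by
        rw [hF, hG, ← tsum_mul_left]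
        exact Summable.tsum_le_tsum
          (fun n => by nlinarith [habK n, pow_nonneg hx0.le n, (hb n).le]) hsa hsK
      have hF1 : (1:ℝ) ≤ F x := hFge1 x hx0 hsa
      have hKG0 : (0:ℝ) < K * G x := by nlinarith
      rw [inv_mul_eq_div, div_div, mul_comm (G x) K]
      exact div_le_div_of_nonneg_left (rpow_pos_of_pos hx0 j).le (by linarith) hFKG
  have hinteq : (∫ x in Set.Ioi (0:ℝ), K⁻¹ * (x ^ j / G x)) = ∫ x in Set.Ioi (0:ℝ), x ^ j / F x := by
    have hsm : (∫ x in Set.Ioi (0:ℝ), K⁻¹ * (x ^ j / G x))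
        = K⁻¹ * ∫ x in Set.Ioi (0:ℝ), x ^ j / G x := by
      simpa [smul_eq_mul] using
        integral_smul (μ := volume.restrict (Set.Ioi (0:ℝ))) K⁻¹ (fun x => x ^ j / G x)
    rw [hsm, ← heq]
  have haeeq := aux17_ae_eq (hIntGj.const_mul K⁻¹) hIntFj hcomp hinteq
  have hae2 : ∀ᵐ x ∂(volume.restrict (Set.Ioi (0:ℝ))), 1 / F x = K⁻¹ * (1 / G x) := by
    have hmem := ae_restrict_mem (μ := volume) (measurableSet_Ioi : MeasurableSet (Set.Ioi (0:ℝ)))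
    filter_upwards [haeeq, hmem] with x hx hx0
    have hx0' : (0:ℝ) < x := hx0
    have hxj : x ^ j ≠ 0 := (rpow_pos_of_pos hx0' j).ne'
    have h' : x ^ j * (1 / F x) = x ^ j * (K⁻¹ * (1 / G x)) := by
      rw [mul_one_div, ← hx]
      ring
    exact mul_left_cancel₀ hxj h'
  have hIeq : (1:ℝ) - β = K⁻¹ * (1 - β) := by
    have h1 : (∫ x in Set.Ioi (0:ℝ), 1 / F x)
        = ∫ x in Set.Ioi (0:ℝ), K⁻¹ * (1 / G x) := integral_congr_ae hae2
    have h2 : (∫ x in Set.Ioi (0:ℝ), K⁻¹ * (1 / G x))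
        = K⁻¹ * ∫ x in Set.Ioi (0:ℝ), 1 / G x := by
      simpa [smul_eq_mul] using
        integral_smul (μ := volume.restrict (Set.Ioi (0:ℝ))) K⁻¹ (fun x => 1 / G x)
    rw [hIF, h2, hIG] at h1
    exact h1
  have hKone : K = 1 := by
    have h2 : (K⁻¹ - 1) * (1 - β) = 0 := by linear_combination -hIeq
    rcases mul_eq_zero.mp h2 with h | h
    · have : K⁻¹ = 1 := by linarith
      exact inv_eq_one.mp this
    · linarith
  rw [hKone] at habK hae2
  simp only [one_mul, inv_one] at habK hae2
  have hexk : ∃ k, a k < b k := by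
    by_contra hex
    push_neg at hex
    have hab : a = b := funext fun k => le_antisymm (habK k) (hex k)
    apply hne
    funext x
    rw [hF, hG, hab]
  obtain ⟨k, hk⟩ := hexk
  have hTbad : ∀ x ∈ T, ¬ (1 / F x = 1 / G x) := by
    intro x hxT
    obtain ⟨hx0, hGx⟩ := hTprop x hxT
    obtain ⟨hs, hG1⟩ := hGpos x hx0 hGx
    have hsa : Summable (fun n : ℕ => a n * x ^ n) :=
      hs.of_nonneg_of_le (fun n => mul_nonneg (ha n).le (pow_nonneg hx0.le n))
        (fun n => mul_le_mul_of_nonneg_right (habK n) (pow_nonneg hx0.le n))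
    have hFG : F x < G x := by
      rw [hF, hG]
      exact Summable.tsum_lt_tsum_of_nonneg
        (fun n => mul_nonneg (ha n).le (pow_nonneg hx0.le n))
        (fun n => mul_le_mul_of_nonneg_right (habK n) (pow_nonneg hx0.le n))
        (mul_lt_mul_of_pos_right hk (pow_pos hx0 k)) hs
    have hF1 : (1:ℝ) ≤ F x := hFge1 x hx0 hsa
    exact (one_div_lt_one_div_of_lt (by linarith) hFG).ne'
  have hnull : volume.restrict (Set.Ioi (0:ℝ)) {x | ¬ (1 / F x = 1 / G x)} = 0 :=
    ae_iff.mp hae2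
  have hT0 : volume.restrict (Set.Ioi (0:ℝ)) T = 0 :=
    measure_mono_null (fun x hx => hTbad x hx) hnull
  rw [Measure.restrict_apply' measurableSet_Ioi, inter_eq_self_of_subset_left hTsub] at hT0
  exact hTpos.ne' hT0

theorem stmt17 (β : ℝ) (hβ : β ∈ Set.Ico (0:ℝ) 1)
    (cc ccbar : ℕ → ℝ) (hcc : ∀ n, 0 < cc n) (hccbar : ∀ n, 0 < ccbar n)
    (hcc0 : cc 0 = 1) (hccbar0 : ccbar 0 = 1)
    (f₀ f₁ : ℝ → ℝ)
    (hf₀ : ∀ x : ℝ, f₀ x = ∑' n : ℕ, cc n * x ^ n)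
    (hf₁ : ∀ x : ℝ, f₁ x = ∑' n : ℕ, ccbar n * x ^ n)
    (hne : f₀ ≠ f₁)
    (hbal₀ : ∀ n : ℕ,
      (∫ x in Set.Ioi (0:ℝ), cc n * x ^ n / f₀ x) = 1 - if n = 0 then β else 0)
    (hbal₁ : ∀ n : ℕ,
      (∫ x in Set.Ioi (0:ℝ), ccbar n * x ^ n / f₁ x) = 1 - if n = 0 then β else 0)
    (c cbar : ℝ → ℝ)
    (hc : ∀ i : ℝ, 1 ≤ i → c i = (∫ x in Set.Ioi (0:ℝ), x ^ i / f₀ x)⁻¹)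
    (hcbar : ∀ i : ℝ, 1 ≤ i → cbar i = (∫ x in Set.Ioi (0:ℝ), x ^ i / f₁ x)⁻¹)
    (Q : Set ℝ) (hQ : Q = {r : ℝ | ∃ i : ℝ, 1 ≤ i ∧ r = c i / cbar i}) :
    sSup Q ∉ Q ∧ sInf Q ∉ Q := by
  have hf₀nn : ∀ x : ℝ, 0 < x → 0 ≤ f₀ x := fun x hx => by
    rw [hf₀]; exact tsum_nonneg fun n => mul_nonneg (hcc n).le (pow_nonneg hx.le n)
  have hf₁nn : ∀ x : ℝ, 0 < x → 0 ≤ f₁ x := fun x hx => by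
    rw [hf₁]; exact tsum_nonneg fun n => mul_nonneg (hccbar n).le (pow_nonneg hx.le n)
  have hI₀pos : ∀ i : ℝ, 1 ≤ i → 0 < ∫ x in Set.Ioi (0:ℝ), x ^ i / f₀ x :=
    fun i hi => aux17_int_pos β hβ cc hcc hcc0 f₀ hf₀nn hbal₀ hi
  have hI₁pos : ∀ i : ℝ, 1 ≤ i → 0 < ∫ x in Set.Ioi (0:ℝ), x ^ i / f₁ x :=
    fun i hi => aux17_int_pos β hβ ccbar hccbar hccbar0 f₁ hf₁nn hbal₁ hi
  have hcpos : ∀ i : ℝ, 1 ≤ i → 0 < c i := fun i hi => by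
    rw [hc i hi]; exact inv_pos.mpr (hI₀pos i hi)
  have hcbpos : ∀ i : ℝ, 1 ≤ i → 0 < cbar i := fun i hi => by
    rw [hcbar i hi]; exact inv_pos.mpr (hI₁pos i hi)
  have hQpos : ∀ r ∈ Q, 0 < r := by
    intro r hr
    rw [hQ] at hr
    obtain ⟨i, hi, rfl⟩ := hr
    exact div_pos (hcpos i hi) (hcbpos i hi)
  have hcnat : ∀ n : ℕ, n ≠ 0 → c n = cc n := by
    intro n hn
    have h1n : (1:ℝ) ≤ (n:ℝ) := by exact_mod_cast Nat.one_le_iff_ne_zero.mpr hn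
    have hIeq : (∫ x in Set.Ioi (0:ℝ), x ^ ((n:ℕ):ℝ) / f₀ x)
        = ∫ x in Set.Ioi (0:ℝ), x ^ (n:ℕ) / f₀ x :=
      setIntegral_congr_fun measurableSet_Ioi fun x _ => by rw [rpow_natCast]
    have hbal := hbal₀ n
    rw [if_neg hn, sub_zero] at hbal
    have hmul : (∫ x in Set.Ioi (0:ℝ), cc n * x ^ n / f₀ x)
        = cc n * ∫ x in Set.Ioi (0:ℝ), x ^ n / f₀ x := by
      have hfun : (fun x : ℝ => cc n * x ^ n / f₀ x) = fun x : ℝ => cc n * (x ^ n / f₀ x) := by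
        funext x; rw [mul_div_assoc]
      rw [hfun]
      simpa [smul_eq_mul] using
        integral_smul (μ := volume.restrict (Set.Ioi (0:ℝ))) (cc n) (fun x : ℝ => x ^ n / f₀ x)
    rw [hmul] at hbal
    have hI : (∫ x in Set.Ioi (0:ℝ), x ^ (n:ℕ) / f₀ x) = (cc n)⁻¹ :=
      eq_inv_of_mul_eq_one_left (by rw [mul_comm]; exact hbal)
    rw [hc n h1n, hIeq, hI, inv_inv]
  have hcbnat : ∀ n : ℕ, n ≠ 0 → cbar n = ccbar n := by
    intro n hn
    have h1n : (1:ℝ) ≤ (n:ℝ) := by exact_mod_cast Nat.one_le_iff_ne_zero.mpr hn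
    have hIeq : (∫ x in Set.Ioi (0:ℝ), x ^ ((n:ℕ):ℝ) / f₁ x)
        = ∫ x in Set.Ioi (0:ℝ), x ^ (n:ℕ) / f₁ x :=
      setIntegral_congr_fun measurableSet_Ioi fun x _ => by rw [rpow_natCast]
    have hbal := hbal₁ n
    rw [if_neg hn, sub_zero] at hbal
    have hmul : (∫ x in Set.Ioi (0:ℝ), ccbar n * x ^ n / f₁ x)
        = ccbar n * ∫ x in Set.Ioi (0:ℝ), x ^ n / f₁ x := by
      have hfun : (fun x : ℝ => ccbar n * x ^ n / f₁ x)
          = fun x : ℝ => ccbar n * (x ^ n / f₁ x) := by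
        funext x; rw [mul_div_assoc]
      rw [hfun]
      simpa [smul_eq_mul] using
        integral_smul (μ := volume.restrict (Set.Ioi (0:ℝ))) (ccbar n) (fun x : ℝ => x ^ n / f₁ x)
    rw [hmul] at hbal
    have hI : (∫ x in Set.Ioi (0:ℝ), x ^ (n:ℕ) / f₁ x) = (ccbar n)⁻¹ :=
      eq_inv_of_mul_eq_one_left (by rw [mul_comm]; exact hbal)
    rw [hcbar n h1n, hIeq, hI, inv_inv]
  constructor
  · intro hmem
    by_cases hbdd : BddAbove Q
    · set M := sSup Q with hM
      obtain ⟨jj, hj1, hjM⟩ : ∃ i : ℝ, 1 ≤ i ∧ M = c i / cbar i := by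
        rw [hQ] at hmem; exact hmem
      have hMpos : 0 < M := hQpos M hmem
      have hle : ∀ n : ℕ, n ≠ 0 → cc n ≤ M * ccbar n := by
        intro n hn
        have h1n : (1:ℝ) ≤ (n:ℝ) := by exact_mod_cast Nat.one_le_iff_ne_zero.mpr hn
        have hmemQ : c (n:ℝ) / cbar (n:ℝ) ∈ Q := by
          rw [hQ]; exact ⟨(n:ℝ), h1n, rfl⟩
        have hle' := le_csSup hbdd hmemQ
        rw [div_le_iff₀ (hcbpos _ h1n)] at hle'
        rw [← hcnat n hn, ← hcbnat n hn]
        exact hle'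
      have hKeq : (∫ x in Set.Ioi (0:ℝ), x ^ jj / f₀ x)
          = M⁻¹ * ∫ x in Set.Ioi (0:ℝ), x ^ jj / f₁ x := by
        have hcj : c jj = M * cbar jj := by
          rw [hjM, div_mul_cancel₀ _ (hcbpos jj hj1).ne']
        rw [hc jj hj1, hcbar jj hj1] at hcj
        rw [← inv_inv (∫ x in Set.Ioi (0:ℝ), x ^ jj / f₀ x), hcj, mul_inv, inv_inv]
      exact aux17_key β hβ cc ccbar hcc hccbar hcc0 hccbar0 f₀ f₁ hf₀ hf₁ hne hbal₀ hbal₁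
        M hMpos jj hj1 hle hKeq
    · rw [csSup_of_not_bddAbove hbdd, Real.sSup_empty] at hmem
      exact lt_irrefl 0 (hQpos 0 hmem)
  · intro hmem
    have hbdd : BddBelow Q := ⟨0, fun r hr => (hQpos r hr).le⟩
    set m := sInf Q with hm
    obtain ⟨jj, hj1, hjm⟩ : ∃ i : ℝ, 1 ≤ i ∧ m = c i / cbar i := by
      rw [hQ] at hmem; exact hmem
    have hmpos : 0 < m := hQpos m hmem
    have hle : ∀ n : ℕ, n ≠ 0 → ccbar n ≤ m⁻¹ * cc n := by
      intro n hn
      have h1n : (1:ℝ) ≤ (n:ℝ) := by exact_mod_cast Nat.one_le_iff_ne_zero.mpr hn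
      have hmemQ : c (n:ℝ) / cbar (n:ℝ) ∈ Q := by
        rw [hQ]; exact ⟨(n:ℝ), h1n, rfl⟩
      have hmle := csInf_le hbdd hmemQ
      rw [le_div_iff₀ (hcbpos _ h1n)] at hmle
      rw [← hcnat n hn, ← hcbnat n hn]
      calc cbar (n:ℝ) = m⁻¹ * (m * cbar (n:ℝ)) := by
            rw [← mul_assoc, inv_mul_cancel₀ hmpos.ne', one_mul]
        _ ≤ m⁻¹ * c (n:ℝ) := by
            exact mul_le_mul_of_nonneg_left hmle (inv_pos.mpr hmpos).le
    have hKeq : (∫ x in Set.Ioi (0:ℝ), x ^ jj / f₁ x)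
        = (m⁻¹)⁻¹ * ∫ x in Set.Ioi (0:ℝ), x ^ jj / f₀ x := by
      rw [inv_inv]
      have hcj : c jj = m * cbar jj := by
        rw [hjm, div_mul_cancel₀ _ (hcbpos jj hj1).ne']
      rw [hc jj hj1, hcbar jj hj1] at hcj
      have h2 : (∫ x in Set.Ioi (0:ℝ), x ^ jj / f₁ x)⁻¹
          = m⁻¹ * (∫ x in Set.Ioi (0:ℝ), x ^ jj / f₀ x)⁻¹ := by
        rw [hcj, ← mul_assoc, inv_mul_cancel₀ hmpos.ne', one_mul]
      rw [← inv_inv (∫ x in Set.Ioi (0:ℝ), x ^ jj / f₁ x), h2, mul_inv, inv_inv, inv_inv]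
    exact aux17_key β hβ ccbar cc hccbar hcc hccbar0 hcc0 f₁ f₀ hf₁ hf₀ (Ne.symm hne)
      hbal₁ hbal₀ m⁻¹ (inv_pos.mpr hmpos) jj hj1 hle hKeq
end
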